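/- Let H be a digraph, let R be a closed reduced walk of even length in H based at a vertex h, and let P be a reduced walk of even length in H starting at h. If R does not satisfy the IN-zigzag pattern, then at most one of the reduced walks RⁿP ∈ π(H), n ∈ ℤ, satisfies the IN-zigzag pattern. (The analogous statement holds for the OUT-zigzag pattern.) -/

import Mathlib

namespace HRecoloring

/-- A digraph: a vertex type together with an arc relation. -/
structure Dgraph (V : Type) where
  Adj : V → V → Prop

variable {V X : Type}

/-- Adjacency in the underlying undirected graph. -/
def Dgraph.UAdj (G : Dgraph V) (u v : V) : Prop := G.Adj u v ∨ G.Adj v u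

/-- A digraph is loopless if it has no arc `v → v`. -/
def Dgraph.Loopless (G : Dgraph V) : Prop := ∀ v, ¬ G.Adj v v

/-- A digraph is reflexive if `v → v` for every vertex `v`. -/
def Dgraph.IsReflexive (G : Dgraph V) : Prop := ∀ v, G.Adj v v

/-- A symmetric digraph, which we identify with an undirected graph. -/
def Dgraph.IsSymmetric (G : Dgraph V) : Prop := ∀ u v, G.Adj u v → G.Adj v u

/-- The underlying undirected graph, as a symmetric digraph. -/
def Dgraph.usym (G : Dgraph V) : Dgraph V := ⟨fun u v => G.UAdj u v⟩

/-- A (di)graph homomorphism. -/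
def IsHom (G : Dgraph V) (H : Dgraph X) (f : V → X) : Prop :=
  ∀ ⦃u v⦄, G.Adj u v → H.Adj (f u) (f v)

/-- A walk from `a` to `b`, encoded by its list of successive vertices.
A walk in a digraph is a walk in its underlying undirected graph. -/
def IsWalk (G : Dgraph V) (a b : V) (l : List V) : Prop :=
  l ≠ [] ∧ l.head? = some a ∧ l.getLast? = some b ∧ l.Chain' G.UAdj

/-- Weak connectivity. -/
def Dgraph.WConn (G : Dgraph V) : Prop := ∀ u v : V, ∃ l, IsWalk G u v l

/-- Concatenation of two walks sharing an endpoint. -/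
def wcomp (l₁ l₂ : List V) : List V := l₁ ++ l₂.tail

/-- Number of edges of a walk. -/
def wlen (l : List V) : ℕ := l.length - 1

/-- One reduction step on walks: delete a backtracking pair `(x y)(y x)` or a
one-edge loop step `(x x)`. -/
def RStep (l l' : List V) : Prop :=
  (∃ (p s : List V) (x y : V), l = p ++ [x, y, x] ++ s ∧ l' = p ++ [x] ++ s) ∨
  (∃ (p s : List V) (x : V), l = p ++ [x, x] ++ s ∧ l' = p ++ [x] ++ s)

/-- Equality of walks in the fundamental groupoid `π(H)`: the equivalence
generated by reduction steps (two walks are equal in `π(H)` iff they reduce to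
the same reduced walk). -/
def PiEq (l l' : List V) : Prop := Relation.EqvGen RStep l l'

/-- A walk is reduced if no reduction step applies to it. -/
def IsReduced (l : List V) : Prop := ∀ l', ¬ RStep l l'

/-- A closed walk is cyclically reduced if it is reduced and its first and last
edges are not inverses of each other. -/
def IsCycReduced (l : List V) : Prop :=
  IsReduced l ∧ ∃ h : 2 ≤ l.length,
    l.get ⟨1, by omega⟩ ≠ l.get ⟨l.length - 2, by omega⟩

/-- `n`-fold concatenation of a closed walk `R` based at `h`. -/
def witer (R : List V) (h : V) : ℕ → List V
  | 0 => [h]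
  | n + 1 => wcomp R (witer R h n)

/-- `Rⁿ` for an integer `n`, for a closed walk `R` based at `h`; for `n < 0`
this is the `|n|`-fold concatenation of the reversed walk `R⁻¹`. -/
def zpowWalk (R : List V) (h : V) (n : ℤ) : List V :=
  if 0 ≤ n then witer R h n.toNat else witer R.reverse h (-n).toNat

/-- A walk is symmetric if every edge it traverses is a symmetric arc. -/
def IsSymWalk (H : Dgraph X) (l : List X) : Prop :=
  l.Chain' fun a b => H.Adj a b ∧ H.Adj b a

/-- The conjugated walk `α(W)⁻¹ · Q · β(W)`. -/
def conj (α β : V → X) (Wl : List V) (Q : List X) : List X :=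
  wcomp (wcomp (Wl.map α).reverse Q) (Wl.map β)

/-- Topological validity of a walk `Q` from `α q` to `β q`:
`β(C) = Q⁻¹ · α(C) · Q` in `π(H)` for every closed walk `C` at `q`. -/
def TopValid (G : Dgraph V) (H : Dgraph X) (α β : V → X) (q : V) (Q : List X) : Prop :=
  ∀ C : List V, IsWalk G q q C →
    PiEq (C.map β) (wcomp (wcomp Q.reverse (C.map α)) Q)

/-- IN-zigzag pattern `a₁ ← a₂ → a₃ ← … ← a_{n-1} → a_n`. -/
def INCompatible (H : Dgraph X) (l : List X) : Prop :=
  ∀ (i : ℕ) (h : i + 1 < l.length),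
    if i % 2 = 0 then H.Adj (l.get ⟨i + 1, h⟩) (l.get ⟨i, by omega⟩)
    else H.Adj (l.get ⟨i, by omega⟩) (l.get ⟨i + 1, h⟩)

/-- OUT-zigzag pattern `a₁ → a₂ ← a₃ → … → a_{n-1} ← a_n`. -/
def OUTCompatible (H : Dgraph X) (l : List X) : Prop :=
  ∀ (i : ℕ) (h : i + 1 < l.length),
    if i % 2 = 0 then H.Adj (l.get ⟨i, by omega⟩) (l.get ⟨i + 1, h⟩)
    else H.Adj (l.get ⟨i + 1, h⟩) (l.get ⟨i, by omega⟩)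

/-- A vertex is of type IN if it has an in-neighbor. -/
def TypeIN (G : Dgraph V) (v : V) : Prop := ∃ u, G.Adj u v

/-- A vertex is of type OUT if it has an out-neighbor. -/
def TypeOUT (G : Dgraph V) (v : V) : Prop := ∃ u, G.Adj v u

/-- A vertex is of type SYM if it is of type IN and of type OUT. -/
def TypeSYM (G : Dgraph V) (v : V) : Prop := TypeIN G v ∧ TypeOUT G v

/-- The zigzag condition for the vertex `v`. -/
def Zigzag (G : Dgraph V) (H : Dgraph X) (v : V) (l : List X) : Prop :=
  (TypeIN G v → INCompatible H l) ∧ (TypeOUT G v → OUTCompatible H l)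

/-- A recoloring sequence: a nonempty sequence of homomorphisms in which
consecutive homomorphisms differ on exactly one vertex. -/
def IsRecolSeq (G : Dgraph V) (H : Dgraph X) (σs : List (V → X)) : Prop :=
  σs ≠ [] ∧ (∀ σ ∈ σs, IsHom G H σ) ∧ σs.Chain' fun σ σ' => ∃! u, σ u ≠ σ' u

/-- The monochromatic neighborhood property: whenever a vertex changes its
color, all of its neighbors (in the underlying undirected graph) have one
common color. -/
def MonoNbhd (G : Dgraph V) (σs : List (V → X)) : Prop :=
  σs.Chain' fun σ σ' => ∀ v, σ v ≠ σ' v → ∃ h, ∀ w, G.UAdj v w → σ w = h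

/-- `VWalk G v σs S`: `S` is the vertex walk `S(v)` of the recoloring sequence
`σs`; each color change of `v` from `a` to `b`, while all neighbors of `v` are
colored `h`, contributes the two edges `(a h)(h b)`. -/
inductive VWalk (G : Dgraph V) (v : V) : List (V → X) → List X → Prop
  | single (σ : V → X) : VWalk G v [σ] [σ v]
  | stay {σ σ' : V → X} {rest : List (V → X)} {l : List X} :
      σ v = σ' v → VWalk G v (σ' :: rest) l → VWalk G v (σ :: σ' :: rest) l
  | move {σ σ' : V → X} {rest : List (V → X)} {l : List X} (h : X) :
      σ v ≠ σ' v → (∀ w, G.UAdj v w → σ w = h) →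
      VWalk G v (σ' :: rest) l → VWalk G v (σ :: σ' :: rest) (σ v :: h :: l)

/-- `H`-realizability of a walk `Q` via recoloring sequences satisfying the
monochromatic neighborhood property: `Q = S(q)` in `π(H)`. -/
def MRealizable (G : Dgraph V) (H : Dgraph X) (α β : V → X) (q : V) (Q : List X) : Prop :=
  ∃ (σs : List (V → X)) (Sq : List X),
    IsRecolSeq G H σs ∧ σs.head? = some α ∧ σs.getLast? = some β ∧
    MonoNbhd G σs ∧ VWalk G q σs Sq ∧ PiEq Sq Q

/-- Orientation compatibility of a walk `Q`: every generated vertex walk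
satisfies the zigzag condition. -/
def OrientCompatible (G : Dgraph V) (H : Dgraph X) (α β : V → X) (q : V) (Q : List X) : Prop :=
  ∀ (v : V) (Wl : List V), IsWalk G q v Wl →
    ∀ S : List X, IsReduced S → PiEq (conj α β Wl Q) S → Zigzag G H v S

/-- Hom₁-adjacency: the homomorphisms differ on exactly one vertex and, for
every arc `x → y` of `G`, both `φ x → ψ y` and `ψ x → φ y` are arcs of `H`. -/
def Hom1Adj (G : Dgraph V) (H : Dgraph X) (φ ψ : V → X) : Prop :=
  (∃! u, φ u ≠ ψ u) ∧ ∀ ⦃x y⦄, G.Adj x y → H.Adj (φ x) (ψ y) ∧ H.Adj (ψ x) (φ y)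

/-- A recoloring sequence in the Hom₁ sense (digraphs). -/
def Hom1Seq (G : Dgraph V) (H : Dgraph X) (σs : List (V → X)) : Prop :=
  σs ≠ [] ∧ (∀ σ ∈ σs, IsHom G H σ) ∧ σs.Chain' (Hom1Adj G H)

/-- A recoloring sequence in which each step recolors exactly one vertex to an
adjacent color (the Hom₁ sense for reflexive undirected graphs). -/
def AdjRecolSeq (G : Dgraph V) (H : Dgraph X) (σs : List (V → X)) : Prop :=
  σs ≠ [] ∧ (∀ σ ∈ σs, IsHom G H σ) ∧
  σs.Chain' fun σ σ' => (∃! u, σ u ≠ σ' u) ∧ ∀ u, σ u ≠ σ' u → H.Adj (σ u) (σ' u)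

/-- The push-or-pull property: whenever a vertex changes its color from `a` to
`b`, every neighbor of that vertex has color `a` or `b`. -/
def PushOrPull (G : Dgraph V) (σs : List (V → X)) : Prop :=
  σs.Chain' fun σ σ' => ∀ u, σ u ≠ σ' u → ∀ w, G.UAdj u w → σ w = σ u ∨ σ w = σ' u

/-- The walk of successive colors of `v` along a recoloring sequence. -/
def colorWalk (σs : List (V → X)) (v : V) : List X := σs.map fun σ => σ v

/-- `H`-realizability via recoloring sequences (reflexive undirected Hom₁
sense) satisfying the push-or-pull property. -/
def PRealizable (G : Dgraph V) (H : Dgraph X) (α β : V → X) (q : V) (Q : List X) : Prop :=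
  ∃ σs : List (V → X), AdjRecolSeq G H σs ∧ σs.head? = some α ∧ σs.getLast? = some β ∧
    PushOrPull G σs ∧ PiEq (colorWalk σs q) Q

/-- `H`-realizability via Hom₁ recoloring sequences of digraphs satisfying the
push-or-pull property. -/
def DRealizable (G : Dgraph V) (H : Dgraph X) (α β : V → X) (q : V) (Q : List X) : Prop :=
  ∃ σs : List (V → X), Hom1Seq G H σs ∧ σs.head? = some α ∧ σs.getLast? = some β ∧
    PushOrPull G σs ∧ PiEq (colorWalk σs q) Q

/-- `H` contains no 4-cycle of algebraic girth 0 as a subgraph (neither of the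
two orientations of the 4-cycle with two forward and two backward arcs). -/
def NoZeroGirthC4 (H : Dgraph X) : Prop :=
  ∀ a b c d : X, a ≠ b → a ≠ c → a ≠ d → b ≠ c → b ≠ d → c ≠ d →
    ¬(H.Adj a b ∧ H.Adj b d ∧ H.Adj a c ∧ H.Adj c d) ∧
    ¬(H.Adj a b ∧ H.Adj d b ∧ H.Adj a c ∧ H.Adj d c)

/-- `H` contains no triangle of algebraic girth 1 as a subgraph. -/
def NoOneGirthTriangle (H : Dgraph X) : Prop :=
  ∀ x y z : X, x ≠ y → y ≠ z → x ≠ z → ¬(H.Adj x y ∧ H.Adj y z ∧ H.Adj x z)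

/-- A path in the reconfiguration graph `R_H(G)` from `α` to `β`. -/
def IsRPath (G : Dgraph V) (H : Dgraph X) (α β : V → X) (L : List (V → X)) : Prop :=
  L ≠ [] ∧ L.head? = some α ∧ L.getLast? = some β ∧
  (∀ σ ∈ L, IsHom G H σ) ∧ L.Chain' fun φ ψ => ∃! u, φ u ≠ ψ u

/-- A path in the graph `Hom₁(G, H)` from `α` to `β`. -/
def IsHom1Path (G : Dgraph V) (H : Dgraph X) (α β : V → X) (L : List (V → X)) : Prop :=
  L ≠ [] ∧ L.head? = some α ∧ L.getLast? = some β ∧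
  (∀ σ ∈ L, IsHom G H σ) ∧ L.Chain' (Hom1Adj G H)

/-- The set of reduced walks `Q` from `α q` to `β q` that generate symmetric
vertex walks on `V'` with the system of walks `Wf`. -/
def SymGenSet (H : Dgraph X) (α β : V → X) (q : V)
    (V' : Set V) (Wf : V → List V) : Set (List X) :=
  {Q | IsWalk H (α q) (β q) Q ∧ IsReduced Q ∧
    ∀ v ∈ V', ∀ S : List X, IsReduced S → PiEq (conj α β (Wf v) Q) S → IsSymWalk H S}

/-- The set of orientation-compatible walks for `q` and the system `Uf`. -/
def OCSet (G : Dgraph V) (H : Dgraph X) (α β : V → X) (q : V)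
    (Uf : V → List V) : Set (List X) :=
  {Q | IsWalk H (α q) (β q) Q ∧ IsReduced Q ∧ Even (wlen Q) ∧
    ∀ (v : V) (S : List X), IsReduced S → PiEq (conj α β (Uf v) Q) S → Zigzag G H v S}

/-- The set `Π_q` of walks from `α q` to `β q` that are `H`-realizable via
recoloring sequences satisfying the monochromatic neighborhood property. -/
def MRealSet (G : Dgraph V) (H : Dgraph X) (α β : V → X) (q : V) : Set (List X) :=
  {Q | IsWalk H (α q) (β q) Q ∧ IsReduced Q ∧ MRealizable G H α β q Q}

/-- The set of walks from `α q` to `β q` that are `H`-realizable via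
recoloring sequences satisfying the push-or-pull property. -/
def PRealSet (G : Dgraph V) (H : Dgraph X) (α β : V → X) (q : V) : Set (List X) :=
  {Q | IsWalk H (α q) (β q) Q ∧ IsReduced Q ∧ PRealizable G H α β q Q}

/-- Ceiling division on natural numbers. -/
def cdiv (a b : ℕ) : ℕ := (a + b - 1) / b

end HRecoloring

open HRecoloring

namespace HRecolAux

open Relation List

variable {V : Type}

/-! ### Basic facts about reduction steps -/

lemma rstep_length {l l' : List V} (h : RStep l l') : l'.length < l.length := by
  rcases h with ⟨p, s, x, y, rfl, rfl⟩ | ⟨p, s, x, rfl, rfl⟩ <;> simp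

lemma rstep_head {l l' : List V} (h : RStep l l') : l.head? = l'.head? := by
  rcases h with ⟨p, s, x, y, rfl, rfl⟩ | ⟨p, s, x, rfl, rfl⟩ <;> cases p <;> simp

lemma rstep_last {l l' : List V} (h : RStep l l') : l.getLast? = l'.getLast? := by
  rcases h with ⟨p, s, x, y, rfl, rfl⟩ | ⟨p, s, x, rfl, rfl⟩
  · cases s with
    | nil =>
        simp only [List.append_nil]
        rw [show p ++ [x, y, x] = (p ++ [x, y]) ++ [x] by simp,
          show p ++ [x] = p ++ [x] by rfl,
          List.getLast?_concat, List.getLast?_concat]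
    | cons a s =>
        rw [List.append_assoc, List.getLast?_append_of_ne_nil _ (by simp),
          List.append_assoc, List.getLast?_append_of_ne_nil _ (by simp),
          List.getLast?_append_of_ne_nil _ (by simp),
          List.getLast?_append_of_ne_nil _ (by simp)]
  · cases s with
    | nil =>
        simp only [List.append_nil]
        rw [show p ++ [x, x] = (p ++ [x]) ++ [x] by simp,
          List.getLast?_concat, List.getLast?_concat]
    | cons a s =>
        rw [List.append_assoc, List.getLast?_append_of_ne_nil _ (by simp),
          List.append_assoc, List.getLast?_append_of_ne_nil _ (by simp),
          List.getLast?_append_of_ne_nil _ (by simp),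
          List.getLast?_append_of_ne_nil _ (by simp)]

lemma rstep_append_right {l l' : List V} (t : List V) (h : RStep l l') :
    RStep (l ++ t) (l' ++ t) := by
  rcases h with ⟨p, s, x, y, rfl, rfl⟩ | ⟨p, s, x, rfl, rfl⟩
  · exact Or.inl ⟨p, s ++ t, x, y, by simp, by simp⟩
  · exact Or.inr ⟨p, s ++ t, x, by simp, by simp⟩

lemma rstep_reverse {l l' : List V} (h : RStep l l') : RStep l.reverse l'.reverse := by
  rcases h with ⟨p, s, x, y, rfl, rfl⟩ | ⟨p, s, x, rfl, rfl⟩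
  · exact Or.inl ⟨s.reverse, p.reverse, x, y, by simp, by simp⟩
  · exact Or.inr ⟨s.reverse, p.reverse, x, by simp, by simp⟩

lemma getElem_mid (p m s : List V) (k : ℕ) (hk : k < m.length) :
    (p ++ m ++ s)[p.length + k]'(by simp; omega) = m[k] := by
  have h1 : (p ++ m ++ s)[p.length + k]'(by simp; omega)
      = (p ++ (m ++ s))[p.length + k]'(by simp; omega) :=
    List.getElem_of_eq (List.append_assoc p m s) _
  rw [h1, List.getElem_append_right (by omega)]
  simp only [Nat.add_sub_cancel_left]
  exact List.getElem_append_left hk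

lemma indices_of_reduced {l : List V} (h : IsReduced l) :
    (∀ i, (hi : i + 1 < l.length) → l[i]'(by omega) ≠ l[i + 1]'hi) ∧
    (∀ i, (hi : i + 2 < l.length) → l[i]'(by omega) ≠ l[i + 2]'hi) := by
  constructor
  · intro i hi heq
    apply h (l.take i ++ [l[i]'(by omega)] ++ l.drop (i + 2))
    refine Or.inr ⟨l.take i, l.drop (i + 2), l[i]'(by omega), ?_, rfl⟩
    conv_lhs => rw [← List.take_append_drop i l]
    rw [List.drop_eq_getElem_cons (by omega), List.drop_eq_getElem_cons (by omega)]
    simp [← heq]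
  · intro i hi heq
    apply h (l.take i ++ [l[i]'(by omega)] ++ l.drop (i + 3))
    refine Or.inl ⟨l.take i, l.drop (i + 3), l[i]'(by omega), l[i+1]'(by omega), ?_, rfl⟩
    conv_lhs => rw [← List.take_append_drop i l]
    rw [List.drop_eq_getElem_cons (show i < l.length by omega),
      List.drop_eq_getElem_cons (show i + 1 < l.length by omega),
      List.drop_eq_getElem_cons (show i + 2 < l.length by omega)]
    simp [← heq]

lemma reduced_of_indices {l : List V}
    (h1 : ∀ i, (hi : i + 1 < l.length) → l[i]'(by omega) ≠ l[i + 1]'hi)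
    (h2 : ∀ i, (hi : i + 2 < l.length) → l[i]'(by omega) ≠ l[i + 2]'hi) :
    IsReduced l := by
  intro l' hstep
  rcases hstep with ⟨p, s, x, y, rfl, -⟩ | ⟨p, s, x, rfl, -⟩
  · refine h2 p.length (by simp) ?_
    have e0 := getElem_mid p [x, y, x] s 0 (by simp)
    have e2 := getElem_mid p [x, y, x] s 2 (by simp)
    simp only [List.getElem_cons_zero] at e0
    simp only [show p.length + 0 = p.length by omega] at e0
    rw [e0, e2]
    simp
  · refine h1 p.length (by simp) ?_
    have e0 := getElem_mid p [x, x] s 0 (by simp)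
    have e1 := getElem_mid p [x, x] s 1 (by simp)
    simp only [show p.length + 0 = p.length by omega] at e0
    rw [e0, e1]
    simp

/-! ### Confluence -/

/-- The two kinds of reduction patterns. -/
def Pat (m r : List V) : Prop :=
  (∃ x y, m = [x, y, x] ∧ r = [x]) ∨ (∃ x, m = [x, x] ∧ r = [x])

lemma rstep_pat {m r : List V} (h : Pat m r) (P S : List V) :
    RStep (P ++ m ++ S) (P ++ r ++ S) := by
  rcases h with ⟨x, y, rfl, rfl⟩ | ⟨x, rfl, rfl⟩
  · exact Or.inl ⟨P, S, x, y, rfl, rfl⟩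
  · exact Or.inr ⟨P, S, x, rfl, rfl⟩

lemma rstep_iff_pat {a b : List V} :
    RStep a b ↔ ∃ p m r s, Pat m r ∧ a = p ++ m ++ s ∧ b = p ++ r ++ s := by
  constructor
  · rintro (⟨p, s, x, y, rfl, rfl⟩ | ⟨p, s, x, rfl, rfl⟩)
    · exact ⟨p, _, _, s, Or.inl ⟨x, y, rfl, rfl⟩, rfl, rfl⟩
    · exact ⟨p, _, _, s, Or.inr ⟨x, rfl, rfl⟩, rfl, rfl⟩
  · rintro ⟨p, m, r, s, hp, rfl, rfl⟩
    exact rstep_pat hp p s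

lemma diamond_core (p₁ m₁ r₁ s₁ p₂ m₂ r₂ s₂ : List V)
    (h₁ : Pat m₁ r₁) (h₂ : Pat m₂ r₂) (hle : p₁.length ≤ p₂.length)
    (heq : p₁ ++ m₁ ++ s₁ = p₂ ++ m₂ ++ s₂) :
    ∃ d, ReflGen RStep (p₁ ++ r₁ ++ s₁) d ∧ ReflGen RStep (p₂ ++ r₂ ++ s₂) d := by
  obtain ⟨t, rfl⟩ : ∃ t, p₂ = p₁ ++ t := by
    refine ⟨p₂.drop p₁.length, ?_⟩
    have h := congrArg (List.take p₁.length) heq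
    rw [List.append_assoc, List.take_left, List.append_assoc,
      List.take_append_of_le_length hle] at h
    conv_lhs => rw [← List.take_append_drop p₁.length p₂, ← h]
  rw [List.append_assoc, List.append_assoc, List.append_assoc] at heq
  replace heq := List.append_cancel_left heq
  rcases h₁ with ⟨x, y, rfl, rfl⟩ | ⟨x, rfl, rfl⟩
  · rcases t with _ | ⟨a, _ | ⟨a', _ | ⟨a'', t⟩⟩⟩
    · -- t = []
      rcases h₂ with ⟨u, v, rfl, rfl⟩ | ⟨u, rfl, rfl⟩
      · simp only [List.cons_append, List.nil_append, List.cons.injEq] at heq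
        obtain ⟨rfl, rfl, -, rfl⟩ := heq
        refine ⟨p₁ ++ [x] ++ s₁, ReflGen.refl, ?_⟩
        simp only [List.append_nil]
        exact ReflGen.refl
      · simp only [List.cons_append, List.nil_append, List.cons.injEq] at heq
        obtain ⟨rfl, rfl, rfl⟩ := heq
        refine ⟨p₁ ++ [y] ++ s₁, ReflGen.refl, ReflGen.single ?_⟩
        simpa using rstep_pat (Or.inr ⟨y, rfl, rfl⟩) p₁ s₁
    · -- t = [a]
      rcases h₂ with ⟨u, v, rfl, rfl⟩ | ⟨u, rfl, rfl⟩
      · simp only [List.cons_append, List.nil_append, List.cons.injEq] at heq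
        obtain ⟨rfl, rfl, rfl, rfl⟩ := heq
        refine ⟨p₁ ++ [x, y] ++ s₂, ?_, ?_⟩
        · simp only [List.append_assoc, List.cons_append, List.nil_append]
          exact ReflGen.refl
        · simp only [List.append_assoc, List.cons_append, List.nil_append]
          exact ReflGen.refl
      · simp only [List.cons_append, List.nil_append, List.cons.injEq] at heq
        obtain ⟨rfl, rfl, rfl, rfl⟩ := heq
        refine ⟨p₁ ++ [x] ++ s₁, ReflGen.refl, ReflGen.single ?_⟩
        simpa using rstep_pat (Or.inr ⟨x, rfl, rfl⟩) p₁ s₁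
    · -- t = [a, a']
      rcases h₂ with ⟨u, v, rfl, rfl⟩ | ⟨u, rfl, rfl⟩
      · simp only [List.cons_append, List.nil_append, List.cons.injEq] at heq
        obtain ⟨rfl, rfl, rfl, rfl⟩ := heq
        refine ⟨p₁ ++ [x] ++ s₂, ReflGen.single ?_, ReflGen.single ?_⟩
        · simpa using rstep_pat (Or.inl ⟨x, v, rfl, rfl⟩) p₁ s₂
        · simpa using rstep_pat (Or.inl ⟨x, y, rfl, rfl⟩) p₁ s₂
      · simp only [List.cons_append, List.nil_append, List.cons.injEq] at heq
        obtain ⟨rfl, rfl, rfl, rfl⟩ := heq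
        refine ⟨p₁ ++ [x] ++ s₂, ReflGen.single ?_, ReflGen.single ?_⟩
        · simpa using rstep_pat (Or.inr ⟨x, rfl, rfl⟩) p₁ s₂
        · simpa using rstep_pat (Or.inl ⟨x, y, rfl, rfl⟩) p₁ s₂
    · -- t = a :: a' :: a'' :: t (disjoint)
      simp only [List.cons_append, List.nil_append, List.cons.injEq] at heq
      obtain ⟨rfl, rfl, rfl, rfl⟩ := heq
      refine ⟨p₁ ++ [x] ++ (t ++ r₂ ++ s₂), ReflGen.single ?_, ReflGen.single ?_⟩
      · simpa [List.append_assoc] using rstep_pat h₂ (p₁ ++ [x] ++ t) s₂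
      · simpa [List.append_assoc] using rstep_pat (Or.inl ⟨x, y, rfl, rfl⟩) p₁ (t ++ r₂ ++ s₂)
  · rcases t with _ | ⟨a, _ | ⟨a', t⟩⟩
    · -- t = []
      rcases h₂ with ⟨u, v, rfl, rfl⟩ | ⟨u, rfl, rfl⟩
      · simp only [List.cons_append, List.nil_append, List.cons.injEq] at heq
        obtain ⟨rfl, rfl, rfl⟩ := heq
        refine ⟨p₁ ++ [x] ++ s₂, ReflGen.single ?_, ?_⟩
        · simpa using rstep_pat (Or.inr ⟨x, rfl, rfl⟩) p₁ s₂
        · simp only [List.append_nil]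
          exact ReflGen.refl
      · simp only [List.cons_append, List.nil_append, List.cons.injEq] at heq
        obtain ⟨rfl, -, rfl⟩ := heq
        refine ⟨p₁ ++ [x] ++ s₁, ReflGen.refl, ?_⟩
        simp only [List.append_nil]
        exact ReflGen.refl
    · -- t = [a]
      rcases h₂ with ⟨u, v, rfl, rfl⟩ | ⟨u, rfl, rfl⟩
      · simp only [List.cons_append, List.nil_append, List.cons.injEq] at heq
        obtain ⟨rfl, rfl, rfl⟩ := heq
        refine ⟨p₁ ++ [x] ++ s₂, ReflGen.single ?_, ReflGen.single ?_⟩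
        · simpa using rstep_pat (Or.inl ⟨x, v, rfl, rfl⟩) p₁ s₂
        · simpa using rstep_pat (Or.inr ⟨x, rfl, rfl⟩) p₁ s₂
      · simp only [List.cons_append, List.nil_append, List.cons.injEq] at heq
        obtain ⟨rfl, rfl, rfl⟩ := heq
        refine ⟨p₁ ++ [x] ++ s₂, ReflGen.single ?_, ReflGen.single ?_⟩
        · simpa using rstep_pat (Or.inr ⟨x, rfl, rfl⟩) p₁ s₂
        · simpa using rstep_pat (Or.inr ⟨x, rfl, rfl⟩) p₁ s₂
    · -- t = a :: a' :: t (disjoint)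
      simp only [List.cons_append, List.nil_append, List.cons.injEq] at heq
      obtain ⟨rfl, rfl, rfl⟩ := heq
      refine ⟨p₁ ++ [x] ++ (t ++ r₂ ++ s₂), ReflGen.single ?_, ReflGen.single ?_⟩
      · simpa [List.append_assoc] using rstep_pat h₂ (p₁ ++ [x] ++ t) s₂
      · simpa [List.append_assoc] using rstep_pat (Or.inr ⟨x, rfl, rfl⟩) p₁ (t ++ r₂ ++ s₂)

lemma diamond {a b c : List V} (hab : RStep a b) (hac : RStep a c) :
    ∃ d, ReflGen RStep b d ∧ ReflGen RStep c d := by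
  rw [rstep_iff_pat] at hab hac
  obtain ⟨p₁, m₁, r₁, s₁, h₁, rfl, rfl⟩ := hab
  obtain ⟨p₂, m₂, r₂, s₂, h₂, heq, rfl⟩ := hac
  rcases le_total p₁.length p₂.length with hle | hle
  · exact diamond_core p₁ m₁ r₁ s₁ p₂ m₂ r₂ s₂ h₁ h₂ hle heq
  · obtain ⟨d, hd₁, hd₂⟩ := diamond_core p₂ m₂ r₂ s₂ p₁ m₁ r₁ s₁ h₂ h₁ hle heq.symm
    exact ⟨d, hd₂, hd₁⟩

lemma piEq_join {a b : List V} (h : PiEq a b) :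
    Relation.Join (ReflTransGen RStep) a b := by
  have hsemi : ∀ a b c : List V, RStep a b → RStep a c →
      ∃ d, ReflGen RStep b d ∧ ReflTransGen RStep c d := by
    intro a b c hab hac
    obtain ⟨d, h1, h2⟩ := diamond hab hac
    exact ⟨d, h1, h2.to_reflTransGen⟩
  have hequiv := Relation.equivalence_join_reflTransGen hsemi
  induction h with
  | rel a b hab => exact ⟨b, ReflTransGen.single hab, ReflTransGen.refl⟩
  | refl a => exact hequiv.refl a
  | symm a b _ ih => exact hequiv.symm ih
  | trans a b c _ _ ih₁ ih₂ => exact hequiv.trans ih₁ ih₂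

lemma rtg_eq_of_reduced {l d : List V} (h : IsReduced l)
    (hr : ReflTransGen RStep l d) : d = l := by
  induction hr with
  | refl => rfl
  | tail h₁ h₂ ih => exact absurd (ih ▸ h₂) (h _)

lemma piEq_unique {l l' : List V} (h : PiEq l l') (hl : IsReduced l)
    (hl' : IsReduced l') : l = l' := by
  obtain ⟨d, h1, h2⟩ := piEq_join h
  rw [← rtg_eq_of_reduced hl h1, ← rtg_eq_of_reduced hl' h2]

lemma rtg_reduced_of_piEq {l q : List V} (h : PiEq l q) (hq : IsReduced q) :
    ReflTransGen RStep l q := by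
  obtain ⟨d, h1, h2⟩ := piEq_join h
  rwa [rtg_eq_of_reduced hq h2] at h1

/-! ### Basic facts about `wcomp` -/

lemma eq_cons_head {l : List V} {a : V} (h : l.head? = some a) : l = a :: l.tail := by
  cases l with
  | nil => simp at h
  | cons b t => simp_all

lemma eq_dropLast_concat {l : List V} {a : V} (h : l.getLast? = some a) :
    l = l.dropLast ++ [a] := by
  cases l using List.reverseRecOn with
  | nil => simp at h
  | append_singleton t b => rw [List.getLast?_concat] at h; simp_all

lemma wcomp_ne_nil {u : List V} (hu : u ≠ []) (v : List V) : wcomp u v ≠ [] := by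
  simp [wcomp, hu]

lemma wcomp_assoc {a b c : List V} (hb : b ≠ []) :
    wcomp (wcomp a b) c = wcomp a (wcomp b c) := by
  cases b with
  | nil => exact absurd rfl hb
  | cons x b' => simp [wcomp, List.append_assoc]

lemma head?_wcomp {u : List V} (hu : u ≠ []) (v : List V) :
    (wcomp u v).head? = u.head? := by
  cases u with
  | nil => exact absurd rfl hu
  | cons x u' => simp [wcomp]

lemma wcomp_single_right (u : List V) (a : V) : wcomp u [a] = u := by
  simp [wcomp]

lemma wcomp_single_left {v : List V} {a : V} (hv : v.head? = some a) :
    wcomp [a] v = v := by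
  cases v with
  | nil => simp at hv
  | cons c v' =>
    obtain rfl : c = a := by simpa using hv
    simp [wcomp]

lemma last?_wcomp {u v : List V} {a : V} (hu : u.getLast? = some a)
    (hv : v.head? = some a) : (wcomp u v).getLast? = v.getLast? := by
  cases v with
  | nil => simp at hv
  | cons c v' =>
    obtain rfl : c = a := by simpa using hv
    cases v' with
    | nil => rw [wcomp_single_right, hu]; simp
    | cons d v'' =>
      have e : wcomp u (c :: d :: v'') = u ++ (d :: v'') := rfl
      rw [e, List.getLast?_append_of_ne_nil _ (by simp), List.getLast?_cons_cons]

lemma length_wcomp {v : List V} (u : List V) (hv : v ≠ []) :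
    (wcomp u v).length = u.length + v.length - 1 := by
  cases v with
  | nil => exact absurd rfl hv
  | cons x v' =>
    simp only [wcomp, List.tail_cons, List.length_append, List.length_cons]
    omega

lemma reverse_wcomp {u v : List V} {a : V} (hu : u.getLast? = some a)
    (hv : v.head? = some a) : (wcomp u v).reverse = wcomp v.reverse u.reverse := by
  conv_lhs => rw [wcomp]
  conv_lhs => rw [eq_dropLast_concat hu]
  conv_lhs => rw [eq_cons_head hv]
  conv_rhs => rw [eq_cons_head hv, eq_dropLast_concat hu]
  simp [wcomp, List.append_assoc]

lemma drop_wcomp {u v : List V} {a : V} (hu : u.getLast? = some a)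
    (hv : v.head? = some a) : (wcomp u v).drop (u.length - 1) = v := by
  have h2 : wcomp u v = u.dropLast ++ v := by
    rw [wcomp]
    conv_lhs => rw [eq_dropLast_concat hu]
    conv_rhs => rw [eq_cons_head hv]
    simp [List.append_assoc]
  rw [h2, show u.length - 1 = u.dropLast.length by simp, List.drop_left]

/-! ### Transport of properties along reductions -/

lemma rtg_head {l l' : List V} (h : ReflTransGen RStep l l') : l.head? = l'.head? := by
  induction h with
  | refl => rfl
  | tail _ h₂ ih => exact ih.trans (rstep_head h₂)

lemma rtg_last {l l' : List V} (h : ReflTransGen RStep l l') : l.getLast? = l'.getLast? := by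
  induction h with
  | refl => rfl
  | tail _ h₂ ih => exact ih.trans (rstep_last h₂)

lemma piEq_head {l l' : List V} (h : PiEq l l') : l.head? = l'.head? := by
  induction h with
  | rel _ _ hab => exact rstep_head hab
  | refl => rfl
  | symm _ _ _ ih => exact ih.symm
  | trans _ _ _ _ _ ih₁ ih₂ => exact ih₁.trans ih₂

lemma piEq_last {l l' : List V} (h : PiEq l l') : l.getLast? = l'.getLast? := by
  induction h with
  | rel _ _ hab => exact rstep_last hab
  | refl => rfl
  | symm _ _ _ ih => exact ih.symm
  | trans _ _ _ _ _ ih₁ ih₂ => exact ih₁.trans ih₂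

lemma rtg_piEq {l l' : List V} (h : ReflTransGen RStep l l') : PiEq l l' := by
  induction h with
  | refl => exact EqvGen.refl _
  | tail _ h₂ ih => exact EqvGen.trans _ _ _ ih (EqvGen.rel _ _ h₂)

lemma piEq_reverse {l l' : List V} (h : PiEq l l') : PiEq l.reverse l'.reverse := by
  induction h with
  | rel _ _ hab => exact EqvGen.rel _ _ (rstep_reverse hab)
  | refl => exact EqvGen.refl _
  | symm _ _ _ ih => exact EqvGen.symm _ _ ih
  | trans _ _ _ _ _ ih₁ ih₂ => exact EqvGen.trans _ _ _ ih₁ ih₂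

lemma rstep_append_right_rtg {l l' : List V} (t : List V)
    (h : ReflTransGen RStep l l') : ReflTransGen RStep (l ++ t) (l' ++ t) := by
  induction h with
  | refl => exact ReflTransGen.refl
  | tail _ h₂ ih => exact ih.tail (rstep_append_right t h₂)

lemma piEq_append_right {l l' : List V} (t : List V) (h : PiEq l l') :
    PiEq (l ++ t) (l' ++ t) := by
  induction h with
  | rel _ _ hab => exact EqvGen.rel _ _ (rstep_append_right t hab)
  | refl => exact EqvGen.refl _
  | symm _ _ _ ih => exact EqvGen.symm _ _ ih
  | trans _ _ _ _ _ ih₁ ih₂ => exact EqvGen.trans _ _ _ ih₁ ih₂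

lemma rstep_wcomp_left {p x y : List V} {v : V} (hp : p.getLast? = some v)
    (hx : x.head? = some v) (h : RStep x y) : RStep (wcomp p x) (wcomp p y) := by
  rw [rstep_iff_pat] at h
  obtain ⟨q, m, r, s, hpat, rfl, rfl⟩ := h
  cases q with
  | nil =>
    simp only [List.nil_append] at hx ⊢
    rcases hpat with ⟨a, b, rfl, rfl⟩ | ⟨a, rfl, rfl⟩
    · obtain rfl : a = v := by simpa using hx
      refine Or.inl ⟨p.dropLast, s, a, b, ?_, ?_⟩
      · conv_lhs => rw [wcomp, eq_dropLast_concat hp]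
        simp [List.append_assoc]
      · conv_lhs => rw [wcomp, eq_dropLast_concat hp]
        simp [List.append_assoc]
    · obtain rfl : a = v := by simpa using hx
      refine Or.inr ⟨p.dropLast, s, a, ?_, ?_⟩
      · conv_lhs => rw [wcomp, eq_dropLast_concat hp]
        simp [List.append_assoc]
      · conv_lhs => rw [wcomp, eq_dropLast_concat hp]
        simp [List.append_assoc]
  | cons a q' =>
    have h1 : wcomp p (a :: q' ++ m ++ s) = (p ++ q') ++ m ++ s := by
      simp [wcomp, List.append_assoc]
    have h2 : wcomp p (a :: q' ++ r ++ s) = (p ++ q') ++ r ++ s := by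
      simp [wcomp, List.append_assoc]
    rw [show (a :: q') ++ m ++ s = a :: (q' ++ m ++ s) by simp,
      show (a :: q') ++ r ++ s = a :: (q' ++ r ++ s) by simp] at *
    rw [show wcomp p (a :: (q' ++ m ++ s)) = (p ++ q') ++ m ++ s by
        simp [wcomp, List.append_assoc],
      show wcomp p (a :: (q' ++ r ++ s)) = (p ++ q') ++ r ++ s by
        simp [wcomp, List.append_assoc]]
    exact rstep_pat hpat (p ++ q') s

lemma rtg_wcomp_left {p : List V} {v : V} (hp : p.getLast? = some v) :
    ∀ {x y : List V}, ReflTransGen RStep x y → x.head? = some v →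
      ReflTransGen RStep (wcomp p x) (wcomp p y) := by
  intro x y h hx
  induction h with
  | refl => exact ReflTransGen.refl
  | @tail b c h₁ h₂ ih =>
    have hb : b.head? = some v := by rw [← rtg_head h₁]; exact hx
    exact ih.tail (rstep_wcomp_left hp hb h₂)

lemma piEq_wcomp_left {p : List V} {v : V} (hp : p.getLast? = some v) :
    ∀ {x y : List V}, PiEq x y → x.head? = some v →
      PiEq (wcomp p x) (wcomp p y) := by
  intro x y h
  induction h with
  | rel a b hab => exact fun hx => EqvGen.rel _ _ (rstep_wcomp_left hp hx hab)
  | refl => exact fun _ => EqvGen.refl _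
  | symm a b hab ih => exact fun hx => EqvGen.symm _ _ (ih ((piEq_head hab).symm ▸ hx))
  | trans a b c hab _ ih₁ ih₂ =>
    exact fun hx => EqvGen.trans _ _ _ (ih₁ hx) (ih₂ ((piEq_head hab) ▸ hx))

/-! ### Cancellation -/

lemma rtg_cancel_core (t : List V) :
    ∀ (x : V) (p s : List V),
      ReflTransGen RStep (p ++ t ++ [x] ++ t.reverse ++ s) (p ++ t.headD x :: s) := by
  induction t with
  | nil =>
    intro x p s
    simp only [List.append_nil, List.reverse_nil, List.headD_nil, List.cons_append,
      List.nil_append, List.append_assoc, List.singleton_append]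
    exact ReflTransGen.refl
  | cons y t' ih =>
    intro x p s
    have step : ReflTransGen RStep ((p ++ [y]) ++ t' ++ [x] ++ t'.reverse ++ (y :: s))
        ((p ++ [y]) ++ t'.headD x :: y :: s) := ih x (p ++ [y]) (y :: s)
    have e1 : p ++ (y :: t') ++ [x] ++ (y :: t').reverse ++ s
        = (p ++ [y]) ++ t' ++ [x] ++ t'.reverse ++ (y :: s) := by
      simp [List.append_assoc]
    have e2 : RStep ((p ++ [y]) ++ t'.headD x :: y :: s) (p ++ (y :: t').headD x :: s) := by
      have := rstep_pat (Or.inl ⟨y, t'.headD x, rfl, rfl⟩) p s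
      simpa [List.append_assoc] using this
    rw [e1]
    exact step.tail e2

lemma rtg_cancel {l : List V} {a : V} (h : l.head? = some a) :
    ReflTransGen RStep (wcomp l l.reverse) [a] := by
  cases l using List.reverseRecOn with
  | nil => simp at h
  | append_singleton t x =>
    have e : wcomp (t ++ [x]) (t ++ [x]).reverse = [] ++ t ++ [x] ++ t.reverse ++ [] := by
      simp [wcomp, List.append_assoc]
    rw [e]
    have := rtg_cancel_core t x [] []
    have ha : t.headD x = a := by
      cases t with
      | nil => simpa using h
      | cons b t' => simpa using h
    rw [ha] at this
    simpa using this

/-! ### Iteration of a closed walk -/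

variable {R : List V} {h : V}

lemma witer_ne_nil (hR : R ≠ []) (n : ℕ) : witer R h n ≠ [] := by
  cases n with
  | zero => simp [witer]
  | succ n => exact wcomp_ne_nil hR _

lemma witer_head (hh : R.head? = some h) (n : ℕ) : (witer R h n).head? = some h := by
  cases n with
  | zero => simp [witer]
  | succ n =>
    have hR : R ≠ [] := by rintro rfl; simp at hh
    rw [witer, head?_wcomp hR, hh]

lemma witer_last (hh : R.head? = some h) (hl : R.getLast? = some h) (n : ℕ) :
    (witer R h n).getLast? = some h := by
  induction n with
  | zero => simp [witer]
  | succ n ih => rw [witer, last?_wcomp hl (witer_head hh n), ih]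

lemma witer_length (hR : R ≠ []) (n : ℕ) :
    (witer R h n).length = n * (R.length - 1) + 1 := by
  induction n with
  | zero => simp [witer]
  | succ n ih =>
    rw [witer, length_wcomp _ (witer_ne_nil hR n), ih]
    have : 1 ≤ R.length := List.length_pos_iff.mpr hR
    ring_nf
    omega

lemma witer_add (hh : R.head? = some h) (j k : ℕ) :
    witer R h (j + k) = wcomp (witer R h j) (witer R h k) := by
  have hR : R ≠ [] := by rintro rfl; simp at hh
  induction j with
  | zero => simp [witer, wcomp_single_left (witer_head hh k)]
  | succ j ih =>
    rw [show j + 1 + k = (j + k) + 1 by omega, witer, witer, ih,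
      ← wcomp_assoc (witer_ne_nil hR j)]

lemma witer_succ_right (hh : R.head? = some h) (n : ℕ) :
    witer R h (n + 1) = wcomp (witer R h n) R := by
  rw [witer_add hh n 1]
  congr 1
  rw [witer, witer, wcomp_single_right]

lemma witer_reverse (hh : R.head? = some h) (hl : R.getLast? = some h) (n : ℕ) :
    (witer R h n).reverse = witer R.reverse h n := by
  induction n with
  | zero => simp [witer]
  | succ n ih =>
    rw [witer, reverse_wcomp hl (witer_head hh n), ih,
      witer_succ_right (by rwa [List.head?_reverse]) n]

/-! ### Index congruence helper -/

lemma gidx {l : List V} {i j : ℕ} (h : i = j) (hi : i < l.length) :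
    l[i]'hi = l[j]'(h ▸ hi) := by subst h; rfl

/-! ### Loop-freeness and parity invariants -/

lemma rstep_loopfree {l l' : List V} (hl : l.Chain' (· ≠ ·)) (h : RStep l l') :
    l'.Chain' (· ≠ ·) ∧ l.length = l'.length + 2 := by
  rcases h with ⟨p, s, x, y, rfl, rfl⟩ | ⟨p, s, x, rfl, rfl⟩
  · rw [List.append_assoc] at hl
    obtain ⟨hp, hxs, hj⟩ := List.isChain_append.mp hl
    have h1 := (List.isChain_cons_cons.mp hxs).2
    have h2 := (List.isChain_cons_cons.mp h1).2
    constructor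
    · unfold List.Chain'
      rw [List.append_assoc, List.isChain_append]
      refine ⟨hp, h2, ?_⟩
      intro a ha b hb
      exact hj a ha b (by simpa using hb)
    · simp only [List.length_append, List.length_cons, List.length_nil]
      omega
  · rw [List.append_assoc] at hl
    obtain ⟨hp, hxs, hj⟩ := List.isChain_append.mp hl
    exact absurd rfl (List.isChain_cons_cons.mp hxs).1

lemma rtg_loopfree {l l' : List V} (hl : l.Chain' (· ≠ ·))
    (h : ReflTransGen RStep l l') :
    l'.Chain' (· ≠ ·) ∧ l.length % 2 = l'.length % 2 := by
  induction h with
  | refl => exact ⟨hl, rfl⟩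
  | tail h₁ h₂ ih =>
    obtain ⟨hc, hp⟩ := ih
    obtain ⟨hc', hlen⟩ := rstep_loopfree hc h₂
    exact ⟨hc', by omega⟩

lemma loopfree_wcomp {u v : List V} (hu : u.Chain' (· ≠ ·)) (hv : v.Chain' (· ≠ ·))
    (huv : u.getLast? = v.head?) (hvne : v ≠ []) : (wcomp u v).Chain' (· ≠ ·) := by
  unfold List.Chain' at *
  rw [wcomp, List.isChain_append]
  refine ⟨hu, hv.tail, ?_⟩
  intro a ha b hb
  cases v with
  | nil => exact absurd rfl hvne
  | cons c v' =>
    cases v' with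
    | nil => simp at hb
    | cons d v'' =>
      obtain rfl : d = b := by simpa using hb
      obtain rfl : c = a := by rw [huv] at ha; simpa using ha
      exact (List.isChain_cons_cons.mp hv).1

/-! ### Transfer of the zigzag pattern -/

lemma incomp_transfer {X : Type} {H : Dgraph X} {l l' : List X} (hc : INCompatible H l)
    (k m : ℕ) (hm : Even m)
    (htake : l'.take (k + 1) = l.take (k + 1))
    (hdrop : l'.drop k = l.drop (k + m))
    (hlen : l'.length + m = l.length) :
    INCompatible H l' := by
  intro i hi
  simp only [List.get_eq_getElem]
  by_cases hik : i + 1 ≤ k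
  · have hb : i + 1 < l.length := by omega
    have g0 : l'[i]'(by omega) = l[i]'(by omega) := by
      calc l'[i]'(by omega) = (l'.take (k+1))[i]'(by simp [List.length_take]; omega) :=
            (List.getElem_take).symm
        _ = (l.take (k+1))[i]'(by rw [← htake]; simp [List.length_take]; omega) :=
            List.getElem_of_eq htake _
        _ = l[i]'(by omega) := List.getElem_take
    have g1 : l'[i+1]'hi = l[i+1]'hb := by
      calc l'[i+1]'hi = (l'.take (k+1))[i+1]'(by simp [List.length_take]; omega) :=
            (List.getElem_take).symm
        _ = (l.take (k+1))[i+1]'(by rw [← htake]; simp [List.length_take]; omega) :=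
            List.getElem_of_eq htake _
        _ = l[i+1]'hb := List.getElem_take
    have hcond := hc i hb
    simp only [List.get_eq_getElem] at hcond
    rw [g0, g1]
    exact hcond
  · obtain ⟨j, rfl⟩ : ∃ j, i = k + j := ⟨i - k, by omega⟩
    obtain ⟨mm, rfl⟩ := hm
    have hb : (k + (mm + mm)) + j + 1 < l.length := by omega
    have g0 : l'[k + j]'(by omega) = l[k + (mm + mm) + j]'(by omega) := by
      calc l'[k + j]'(by omega) = (l'.drop k)[j]'(by simp [List.length_drop]; omega) :=
            (List.getElem_drop).symm
        _ = (l.drop (k + (mm + mm)))[j]'(by rw [← hdrop]; simp [List.length_drop]; omega) :=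
            List.getElem_of_eq hdrop _
        _ = l[k + (mm + mm) + j]'(by omega) := List.getElem_drop
    have g1 : l'[k + j + 1]'hi = l[k + (mm + mm) + j + 1]'hb := by
      calc l'[k + j + 1]'hi = (l'.drop k)[j + 1]'(by simp [List.length_drop]; omega) :=
            (List.getElem_drop (xs := l') (i := k) (j := j + 1)).symm
        _ = (l.drop (k + (mm + mm)))[j + 1]'(by rw [← hdrop]; simp [List.length_drop]; omega) :=
            List.getElem_of_eq hdrop _
        _ = l[k + (mm + mm) + (j + 1)]'(by omega) := List.getElem_drop
        _ = l[k + (mm + mm) + j + 1]'hb := gidx (by omega) _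
    have hcond := hc (k + (mm + mm) + j) hb
    simp only [List.get_eq_getElem] at hcond
    have hpar : (k + (mm + mm) + j) % 2 = (k + j) % 2 := by omega
    rw [hpar] at hcond
    rw [g0, g1]
    exact hcond

lemma rstep_incomp {X : Type} {H : Dgraph X} {l l' : List X} (hl : l.Chain' (· ≠ ·))
    (hc : INCompatible H l) (h : RStep l l') : INCompatible H l' := by
  rcases h with ⟨p, s, x, y, rfl, rfl⟩ | ⟨p, s, x, rfl, rfl⟩
  · refine incomp_transfer hc p.length 2 (by decide) ?_ ?_ (by simp; omega)
    · rw [List.append_assoc, List.append_assoc, List.take_length_add_append 1, List.take_length_add_append 1]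
      simp
    · rw [List.append_assoc, List.append_assoc,
        show p.length = p.length + 0 by omega, List.drop_length_add_append 0,
        show p.length + 0 + 2 = p.length + 2 by omega, List.drop_length_add_append 2]
      rfl
  · rw [List.append_assoc] at hl
    exact absurd rfl (List.isChain_cons_cons.mp (List.isChain_append.mp hl).2.1).1

lemma rtg_incomp {X : Type} {H : Dgraph X} {l l' : List X} (hl : l.Chain' (· ≠ ·))
    (hc : INCompatible H l) (h : ReflTransGen RStep l l') : INCompatible H l' := by
  induction h with
  | refl => exact hc
  | tail h₁ h₂ ih => exact rstep_incomp (rtg_loopfree hl h₁).1 ih h₂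

lemma incomp_wcomp {X : Type} {H : Dgraph X} {u v : List X} (hu : INCompatible H u)
    (hv : INCompatible H v) (huv : u.getLast? = v.head?) (hune : u ≠ []) (hvne : v ≠ [])
    (heven : Even (u.length - 1)) : INCompatible H (wcomp u v) := by
  obtain ⟨a, ha⟩ : ∃ a, u.getLast? = some a := by
    cases hh : u.getLast? with
    | none => rw [List.getLast?_eq_none_iff] at hh; exact absurd hh hune
    | some a => exact ⟨a, rfl⟩
  have hva : v.head? = some a := by rw [← huv, ha]
  have hdrop : (wcomp u v).drop (u.length - 1) = v := drop_wcomp ha hva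
  have htake : (wcomp u v).take u.length = u := by
    rw [wcomp, List.take_append_of_le_length le_rfl, List.take_length]
  have hlen : (wcomp u v).length = u.length + v.length - 1 := length_wcomp u hvne
  have hupos : 1 ≤ u.length := List.length_pos_iff.mpr hune
  intro i hi
  simp only [List.get_eq_getElem]
  by_cases hik : i + 1 < u.length
  · have g0 : (wcomp u v)[i]'(by omega) = u[i]'(by omega) := by
      calc (wcomp u v)[i]'(by omega)
          = ((wcomp u v).take u.length)[i]'(by rw [htake]; omega) := (List.getElem_take).symm
        _ = u[i]'(by omega) := List.getElem_of_eq htake _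
    have g1 : (wcomp u v)[i+1]'hi = u[i+1]'(by omega) := by
      calc (wcomp u v)[i+1]'hi
          = ((wcomp u v).take u.length)[i+1]'(by rw [htake]; omega) := (List.getElem_take).symm
        _ = u[i+1]'(by omega) := List.getElem_of_eq htake _
    have hcond := hu i hik
    simp only [List.get_eq_getElem] at hcond
    rw [g0, g1]
    exact hcond
  · obtain ⟨j, rfl⟩ : ∃ j, i = (u.length - 1) + j := ⟨i - (u.length - 1), by omega⟩
    have hjb : j + 1 < v.length := by
      rw [length_wcomp u hvne] at hi; omega
    have g0 : (wcomp u v)[u.length - 1 + j]'(by omega) = v[j]'(by omega) := by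
      calc (wcomp u v)[u.length - 1 + j]'(by omega)
          = ((wcomp u v).drop (u.length - 1))[j]'(by rw [hdrop]; omega) :=
            (List.getElem_drop).symm
        _ = v[j]'(by omega) := List.getElem_of_eq hdrop _
    have g1 : (wcomp u v)[u.length - 1 + j + 1]'hi = v[j + 1]'hjb := by
      calc (wcomp u v)[u.length - 1 + j + 1]'hi
          = ((wcomp u v).drop (u.length - 1))[j + 1]'(by rw [hdrop]; omega) :=
            (List.getElem_drop (xs := wcomp u v) (i := u.length - 1) (j := j + 1)).symm
        _ = v[j + 1]'hjb := List.getElem_of_eq hdrop _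
    have hcond := hv j hjb
    simp only [List.get_eq_getElem] at hcond
    have hpar : (u.length - 1 + j) % 2 = j % 2 := by
      obtain ⟨c, hcc⟩ := heven; omega
    rw [g0, g1, hpar]
    exact hcond

lemma incomp_reverse {X : Type} {H : Dgraph X} {l : List X} (he : Even (l.length - 1))
    (hc : INCompatible H l) : INCompatible H l.reverse := by
  intro i hi
  simp only [List.get_eq_getElem]
  rw [List.length_reverse] at hi
  have hlpos : 2 ≤ l.length := by omega
  have hodd : l.length % 2 = 1 := by obtain ⟨c, hcc⟩ := he; omega
  set j := l.length - 2 - i with hj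
  have hjb : j + 1 < l.length := by omega
  have g0 : l.reverse[i]'(by simpa using by omega : i < l.reverse.length) = l[j+1]'hjb := by
    rw [List.getElem_reverse]
    exact gidx (by omega) _
  have g1 : l.reverse[i+1]'(by simpa using hi) = l[j]'(by omega) := by
    rw [List.getElem_reverse]
    exact gidx (by omega) _
  have hcond := hc j hjb
  simp only [List.get_eq_getElem] at hcond
  have hpar : j % 2 = (i + 1) % 2 := by omega
  rw [g0, g1]
  by_cases hieven : i % 2 = 0
  · rw [if_pos hieven]
    rw [if_neg (by omega)] at hcond
    exact hcond
  · rw [if_neg hieven]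
    rw [if_pos (by omega)] at hcond
    exact hcond

/-! ### Generic getElem transfer helpers -/

lemma getElem_take_eq {l l' : List V} {K : ℕ} (h : l.take K = l'.take K) {i : ℕ}
    (hiK : i < K) (hil : i < l.length) (hil' : i < l'.length) :
    l[i]'hil = l'[i]'hil' := by
  calc l[i]'hil = (l.take K)[i]'(by simp [List.length_take]; omega) :=
        (List.getElem_take).symm
    _ = (l'.take K)[i]'(by simp [List.length_take]; omega) := List.getElem_of_eq h _
    _ = l'[i]'hil' := List.getElem_take

lemma getElem_drop_eq {l l' : List V} {K K' : ℕ} (h : l.drop K = l'.drop K') {j : ℕ}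
    (hj : K + j < l.length) (hj' : K' + j < l'.length) :
    l[K + j]'hj = l'[K' + j]'hj' := by
  calc l[K + j]'hj = (l.drop K)[j]'(by simp [List.length_drop]; omega) :=
        (List.getElem_drop (xs := l) (i := K) (j := j)).symm
    _ = (l'.drop K')[j]'(by simp [List.length_drop]; omega) := List.getElem_of_eq h _
    _ = l'[K' + j]'hj' := List.getElem_drop

/-! ### Reduced powers of cyclically reduced walks -/

lemma reduced_infix {p l s : List V} (h : IsReduced (p ++ l ++ s)) : IsReduced l := by
  intro l' hstep
  obtain ⟨q, m, r, s', hpat, rfl, rfl⟩ := rstep_iff_pat.mp hstep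
  refine h (p ++ (q ++ r ++ s') ++ s) (rstep_iff_pat.mpr ⟨p ++ q, m, r, s' ++ s, hpat, ?_, ?_⟩)
  · simp [List.append_assoc]
  · simp [List.append_assoc]

lemma getElem_drop_eq' {l w : List V} {K : ℕ} (h : l.drop K = w) {j : ℕ}
    (hj : K + j < l.length) (hj' : j < w.length) : l[K + j]'hj = w[j]'hj' := by
  calc l[K + j]'hj = (l.drop K)[j]'(by simp [List.length_drop]; omega) :=
        (List.getElem_drop (xs := l) (i := K) (j := j)).symm
    _ = w[j]'hj' := List.getElem_of_eq h _

lemma witer_get1 {T : List V} {x : V} (hT2 : 2 ≤ T.length) (m : ℕ)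
    (hb : 1 < (witer T x (m + 1)).length) :
    (witer T x (m + 1))[1]'hb = T[1]'(by omega) := by
  show (T ++ (witer T x m).tail)[1]'_ = _
  exact List.getElem_append_left (by omega)

lemma iter_reduced {T : List V} {x : V} (hTh : T.head? = some x) (hTl : T.getLast? = some x)
    (hTred : IsReduced T) (hT3 : 3 ≤ T.length)
    (hcyc : T[1]'(by omega) ≠ T[T.length - 2]'(by omega)) :
    ∀ m, IsReduced (witer T x (m + 1)) := by
  have hTne : T ≠ [] := by rintro rfl; simp at hTh
  intro m
  induction m with
  | zero =>
    have h1 : witer T x 1 = T := by simp [witer, wcomp]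
    rwa [h1]
  | succ m ih =>
    set w := witer T x (m + 1) with hw
    have hwne : w ≠ [] := witer_ne_nil hTne _
    have hwlen : w.length = (m + 1) * (T.length - 1) + 1 := witer_length hTne _
    have hl : witer T x (m + 2) = wcomp T w := rfl
    have hllen : (wcomp T w).length = T.length + w.length - 1 := length_wcomp T hwne
    have hdrop : (wcomp T w).drop (T.length - 1) = w := drop_wcomp hTl (witer_head hTh _)
    have htake : (wcomp T w).take T.length = T.take T.length := by
      rw [wcomp, List.take_append_of_le_length le_rfl]
    obtain ⟨hred1, hred2⟩ := indices_of_reduced hTred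
    obtain ⟨hredw1, hredw2⟩ := indices_of_reduced ih
    rw [hl]
    apply reduced_of_indices
    · intro i hi
      by_cases hik : i + 1 < T.length
      · rw [getElem_take_eq htake (by omega) (by omega) (by omega),
          getElem_take_eq htake (by omega) (by omega) (by omega)]
        exact hred1 i hik
      · obtain ⟨j, rfl⟩ : ∃ j, i = (T.length - 1) + j := ⟨i - (T.length - 1), by omega⟩
        have e0 : (wcomp T w)[T.length - 1 + j]'(by omega) = w[j]'(by omega) :=
          getElem_drop_eq' hdrop _ _
        have e1 : (wcomp T w)[T.length - 1 + j + 1]'hi = w[j + 1]'(by omega) :=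
          getElem_drop_eq' hdrop (j := j + 1) _ _
        rw [e0, e1]
        exact hredw1 j (by omega)
    · intro i hi
      by_cases hik : i + 2 < T.length
      · rw [getElem_take_eq htake (by omega) (by omega) (by omega),
          getElem_take_eq htake (by omega) (by omega) (by omega)]
        exact hred2 i hik
      · by_cases hik2 : (T.length - 1) ≤ i
        · obtain ⟨j, rfl⟩ : ∃ j, i = (T.length - 1) + j := ⟨i - (T.length - 1), by omega⟩
          have e0 : (wcomp T w)[T.length - 1 + j]'(by omega) = w[j]'(by omega) :=
            getElem_drop_eq' hdrop _ _
          have e1 : (wcomp T w)[T.length - 1 + j + 2]'hi = w[j + 2]'(by omega) :=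
            getElem_drop_eq' hdrop (j := j + 2) _ _
          rw [e0, e1]
          exact hredw2 j (by omega)
        · -- i = T.length - 2, straddling the junction
          have hieq : i = T.length - 2 := by omega
          have g0 : (wcomp T w)[i]'(by omega) = T[T.length - 2]'(by omega) :=
            (getElem_take_eq htake (by omega) (by omega) (by omega)).trans (gidx hieq _)
          have g2 : (wcomp T w)[i + 2]'hi = T[1]'(by omega) := by
            have e1 : (wcomp T w)[i + 2]'hi = (wcomp T w)[(T.length - 1) + 1]'(by omega) :=
              gidx (by omega) _
            have e2 : (wcomp T w)[(T.length - 1) + 1]'(by omega) = w[1]'(by omega) :=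
              getElem_drop_eq' hdrop (j := 1) _ _
            have e3 : w[1]'(by omega) = T[1]'(by omega) := witer_get1 (by omega) m _
            exact (e1.trans e2).trans e3
          rw [g0, g2]
          exact fun hh => hcyc hh.symm

/-! ### Cyclic decomposition of a closed reduced walk -/

lemma cyc_decomp : ∀ (n : ℕ) (C : List V) (c : V), C.length = n →
    C.head? = some c → C.getLast? = some c → IsReduced C → 3 ≤ C.length →
    ∃ (A T : List V) (x : V),
      C = wcomp (wcomp A T) A.reverse ∧
      A.head? = some c ∧ A.getLast? = some x ∧
      T.head? = some x ∧ T.getLast? = some x ∧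
      IsReduced T ∧
      ∃ _h3 : 3 ≤ T.length,
        T[1]'(by omega) ≠ T[T.length - 2]'(by omega) ∧
        C.length + 2 = T.length + 2 * A.length := by
  intro n
  induction n using Nat.strong_induction_on with
  | _ n ih =>
    intro C c hn hh hl hred h3
    by_cases hcyc : C[1]'(by omega) ≠ C[C.length - 2]'(by omega)
    · refine ⟨[c], C, c, ?_, by simp, by simp, hh, hl, hred, h3, hcyc, by simp⟩
      rw [wcomp_single_left hh, show ([c] : List V).reverse = [c] from rfl,
        wcomp_single_right]
    · push_neg at hcyc
      have hCt : C = c :: C.tail := eq_cons_head hh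
      have htne : C.tail ≠ [] := by
        intro hemp
        rw [hCt, hemp] at h3
        simp at h3
      have htl : C.tail.getLast? = some c := by
        rw [hCt] at hl
        rwa [show c :: C.tail = [c] ++ C.tail from rfl,
          List.getLast?_append_of_ne_nil _ htne] at hl
      obtain ⟨M, hCM⟩ : ∃ M, C = [c] ++ M ++ [c] := by
        refine ⟨C.tail.dropLast, ?_⟩
        conv_lhs => rw [hCt, eq_dropLast_concat htl]
        simp
      have hMlen : C.length = M.length + 2 := by
        rw [hCM]
        simp only [List.length_append, List.length_cons, List.length_nil]
        omega
      have hMne : M ≠ [] := by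
        intro hemp
        rw [hemp] at hMlen
        simp at hMlen
        omega
      have hMpos : 1 ≤ M.length := List.length_pos_iff.mpr hMne
      obtain ⟨xx, hMx⟩ : ∃ xx, M.head? = some xx := by
        cases hM' : M.head? with
        | none => rw [List.head?_eq_none_iff] at hM'; exact absurd hM' hMne
        | some a => exact ⟨a, rfl⟩
      obtain ⟨y, hMy⟩ : ∃ y, M.getLast? = some y := by
        cases hM' : M.getLast? with
        | none => rw [List.getLast?_eq_none_iff] at hM'; exact absurd hM' hMne
        | some a => exact ⟨a, rfl⟩
      have g1 : C[1]'(by omega) = xx := by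
        have LB : ∀ k : ℕ, k < M.length + 1 → k < ([c] ++ (M ++ [c])).length := by
          intro k hk
          simp only [List.length_append, List.length_cons, List.length_nil]
          omega
        calc C[1]'(by omega)
            = ([c] ++ M ++ [c])[1]'(by rw [← hCM]; omega) := List.getElem_of_eq hCM _
          _ = ([c] ++ (M ++ [c]))[1]'(LB 1 (by omega)) :=
              List.getElem_of_eq (List.append_assoc _ _ _) _
          _ = (M ++ [c])[0]'(by simp only [List.length_append, List.length_cons, List.length_nil]; omega) :=
              (List.getElem_append_right (by simp)).trans (gidx (by simp) _)
          _ = M[0]'(by omega) := List.getElem_append_left (by omega)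
          _ = (xx :: M.tail)[0]'(by simp) := List.getElem_of_eq (eq_cons_head hMx) _
          _ = xx := rfl
      have g2 : C[C.length - 2]'(by omega) = y := by
        have LB : ∀ k : ℕ, k < M.length + 1 → k < ([c] ++ (M ++ [c])).length := by
          intro k hk
          simp only [List.length_append, List.length_cons, List.length_nil]
          omega
        calc C[C.length - 2]'(by omega)
            = ([c] ++ M ++ [c])[C.length - 2]'(by rw [← hCM]; omega) :=
              List.getElem_of_eq hCM _
          _ = ([c] ++ (M ++ [c]))[C.length - 2]'(LB _ (by omega)) :=
              List.getElem_of_eq (List.append_assoc _ _ _) _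
          _ = (M ++ [c])[M.length - 1]'(by simp only [List.length_append, List.length_cons, List.length_nil]; omega) :=
              (List.getElem_append_right (by simp only [List.length_cons, List.length_nil]; omega)).trans
                (gidx (by simp only [List.length_cons, List.length_nil]; omega) _)
          _ = M[M.length - 1]'(by omega) := List.getElem_append_left (by omega)
          _ = (M.dropLast ++ [y])[M.length - 1]'(by rw [← eq_dropLast_concat hMy]; omega) :=
              List.getElem_of_eq (eq_dropLast_concat hMy) _
          _ = [y][0]'(by simp) :=
              (List.getElem_append_right (by simp only [List.length_dropLast]; omega)).trans
                (gidx (by simp only [List.length_dropLast]; omega) _)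
          _ = y := rfl
      obtain rfl : xx = y := by rw [← g1, ← g2, hcyc]
      have hMred : IsReduced M := reduced_infix (hCM ▸ hred)
      have hM3 : 3 ≤ M.length := by
        rcases M with _ | ⟨m0, _ | ⟨m1, _ | ⟨m2, M3⟩⟩⟩
        · exact absurd rfl hMne
        · refine ((hred [c] (Or.inl ⟨[], [], c, m0, ?_, rfl⟩))).elim
          simpa using hCM
        · have e0 : m0 = xx := by simpa using hMx
          have e1 : m1 = xx := by simpa using hMy
          refine ((hred ([c] ++ [m0] ++ [c]) (Or.inr ⟨[c], [c], m0, ?_, rfl⟩))).elim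
          rw [hCM, show m1 = m0 from e1.trans e0.symm]
        · simp only [List.length_cons]
          omega
      obtain ⟨A', T, x', hMeq, hA'h, hA'l, hTh', hTl', hTred', hT3, hcycT, hlenT⟩ :=
        ih M.length (by omega) M xx rfl hMx hMy hMred hM3
      have hA'ne : A' ≠ [] := by rintro rfl; simp at hA'h
      refine ⟨c :: A', T, x', ?_, by simp, ?_, hTh', hTl', hTred', hT3, hcycT, ?_⟩
      · rw [hCM, hMeq, List.reverse_cons]
        show [c] ++ (wcomp A' T ++ A'.reverse.tail) ++ [c]
            = (c :: wcomp A' T) ++ (A'.reverse ++ [c]).tail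
        rw [List.tail_append_of_ne_nil (by simpa using hA'ne)]
        simp [List.append_assoc]
      · rw [show c :: A' = [c] ++ A' from rfl, List.getLast?_append_of_ne_nil _ hA'ne]
        exact hA'l
      · simp only [List.length_cons]
        omega

/-! ### Conjugated powers -/

lemma getElem_take_eq' {l w : List V} {K : ℕ} (h : l.take K = w) {i : ℕ}
    (hiK : i < K) (hil : i < l.length) (hiw : i < w.length) : l[i]'hil = w[i]'hiw := by
  calc l[i]'hil = (l.take K)[i]'(by simp [List.length_take]; omega) :=
        (List.getElem_take).symm
    _ = w[i]'hiw := List.getElem_of_eq h _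

lemma take_wcomp (F z : List V) : (wcomp F z).take F.length = F := by
  rw [wcomp, List.take_append_of_le_length le_rfl, List.take_length]

section Conj

variable {A T : List V} {c x : V}

lemma S_eq_front (hTne : T ≠ []) (m : ℕ) :
    wcomp (wcomp A (witer T x (m + 1))) A.reverse
      = wcomp (wcomp A T) (wcomp (witer T x m) A.reverse) := by
  show wcomp (wcomp A (wcomp T (witer T x m))) A.reverse = _
  rw [← wcomp_assoc hTne, wcomp_assoc (witer_ne_nil hTne m)]

lemma S_eq_back (hTh : T.head? = some x) (m : ℕ) :
    wcomp (wcomp A (witer T x (m + 1))) A.reverse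
      = wcomp (wcomp A (witer T x m)) (wcomp T A.reverse) := by
  have hTne : T ≠ [] := by rintro rfl; simp at hTh
  rw [witer_succ_right hTh m, ← wcomp_assoc (witer_ne_nil hTne m), wcomp_assoc hTne]

lemma S_drop_mid (hAl : A.getLast? = some x) (hTh : T.head? = some x) (M : ℕ) :
    (wcomp (wcomp A (witer T x M)) A.reverse).drop (A.length - 1)
      = wcomp (witer T x M) A.reverse := by
  have hTne : T ≠ [] := by rintro rfl; simp at hTh
  rw [wcomp_assoc (witer_ne_nil hTne M)]
  exact drop_wcomp hAl (by rw [head?_wcomp (witer_ne_nil hTne M), witer_head hTh])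

lemma C_drop (hAl : A.getLast? = some x) (hTh : T.head? = some x) :
    (wcomp (wcomp A T) A.reverse).drop (A.length - 1) = wcomp T A.reverse := by
  have hTne : T ≠ [] := by rintro rfl; simp at hTh
  rw [wcomp_assoc hTne]
  exact drop_wcomp hAl (by rw [head?_wcomp hTne, hTh])

lemma S_drop_end (hAh : A.head? = some c) (hAl : A.getLast? = some x)
    (hTh : T.head? = some x) (hTl : T.getLast? = some x) (m : ℕ) :
    (wcomp (wcomp A (witer T x (m + 1))) A.reverse).drop
        (A.length - 1 + m * (T.length - 1)) = wcomp T A.reverse := by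
  have hTne : T ≠ [] := by rintro rfl; simp at hTh
  have hAne : A ≠ [] := by rintro rfl; simp at hAh
  rw [S_eq_back hTh m]
  have hidx : A.length - 1 + m * (T.length - 1) = (wcomp A (witer T x m)).length - 1 := by
    rw [length_wcomp _ (witer_ne_nil hTne m), witer_length hTne]
    have : 1 ≤ A.length := List.length_pos_iff.mpr hAne
    omega
  rw [hidx]
  refine drop_wcomp ?_ (by rw [head?_wcomp hTne, hTh])
  rw [last?_wcomp hAl (witer_head hTh m)]
  exact witer_last hTh hTl m

lemma conj_reduced (hAh : A.head? = some c) (hAl : A.getLast? = some x)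
    (hTh : T.head? = some x) (hTl : T.getLast? = some x)
    (hT3 : 3 ≤ T.length) (hcyc : T[1]'(by omega) ≠ T[T.length - 2]'(by omega))
    (hTred : IsReduced T)
    (hCred : IsReduced (wcomp (wcomp A T) A.reverse)) (m : ℕ) :
    IsReduced (wcomp (wcomp A (witer T x (m + 1))) A.reverse) := by
  have hTne : T ≠ [] := by rintro rfl; simp at hTh
  have hAne : A ≠ [] := by rintro rfl; simp at hAh
  have hA1 : 1 ≤ A.length := List.length_pos_iff.mpr hAne
  have hq : (m + 1) * (T.length - 1) = m * (T.length - 1) + (T.length - 1) := by ring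
  set S := wcomp (wcomp A (witer T x (m + 1))) A.reverse with hS
  set C := wcomp (wcomp A T) A.reverse with hC
  have hwlen : (witer T x (m + 1)).length = (m + 1) * (T.length - 1) + 1 :=
    witer_length hTne _
  have hSlen : S.length = 2 * A.length + (m + 1) * (T.length - 1) - 1 := by
    rw [hS, length_wcomp _ (by simpa using hAne), length_wcomp _ (witer_ne_nil hTne _),
      hwlen, List.length_reverse]
    omega
  have hClen : C.length = 2 * A.length + T.length - 2 := by
    rw [hC, length_wcomp _ (by simpa using hAne), length_wcomp _ hTne, List.length_reverse]
    omega
  have hFlen : (wcomp A T).length = A.length + T.length - 1 := length_wcomp _ hTne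
  have htakeF : S.take (wcomp A T).length = C.take (wcomp A T).length := by
    rw [hS, hC, S_eq_front hTne m, take_wcomp, take_wcomp]
  have hdropMid : S.drop (A.length - 1) = wcomp (witer T x (m + 1)) A.reverse :=
    S_drop_mid hAl hTh _
  have htakeMid : (wcomp (witer T x (m + 1)) A.reverse).take (witer T x (m + 1)).length
      = witer T x (m + 1) := take_wcomp _ _
  have hdropEnd : S.drop (A.length - 1 + m * (T.length - 1)) = wcomp T A.reverse :=
    S_drop_end hAh hAl hTh hTl m
  have hdropC : C.drop (A.length - 1) = wcomp T A.reverse := C_drop hAl hTh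
  have hdropSC : S.drop (A.length - 1 + m * (T.length - 1)) = C.drop (A.length - 1) :=
    hdropEnd.trans hdropC.symm
  have hTAlen : (wcomp T A.reverse).length = T.length + A.length - 1 := by
    rw [length_wcomp _ (by simpa using hAne), List.length_reverse]
  obtain ⟨hC1, hC2⟩ := indices_of_reduced hCred
  obtain ⟨hW1, hW2⟩ := indices_of_reduced (iter_reduced hTh hTl hTred hT3 hcyc m)
  have hmid : ∀ j (hj : j < (witer T x (m + 1)).length)
      (hjS : A.length - 1 + j < S.length),
      S[A.length - 1 + j]'hjS = (witer T x (m + 1))[j]'hj := by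
    intro j hj hjS
    have e1 := getElem_drop_eq' hdropMid (j := j) hjS
      (by rw [length_wcomp _ (by simpa using hAne), List.length_reverse]; omega)
    rw [e1 ]
    exact getElem_take_eq' htakeMid (by omega) _ _
  apply reduced_of_indices
  · intro i hi
    by_cases h1 : i + 1 < (wcomp A T).length
    · rw [getElem_take_eq htakeF (by omega) (by omega) (by omega),
        getElem_take_eq htakeF (by omega) (by omega) (by omega)]
      exact hC1 i (by omega)
    · by_cases h2 : A.length - 1 + m * (T.length - 1) ≤ i
      · obtain ⟨j, rfl⟩ : ∃ j, i = (A.length - 1 + m * (T.length - 1)) + j :=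
          ⟨i - (A.length - 1 + m * (T.length - 1)), by omega⟩
        have e0 : S[A.length - 1 + m * (T.length - 1) + j]'(by omega)
            = C[A.length - 1 + j]'(by omega) := getElem_drop_eq hdropSC (by omega) (by omega)
        have e1 : S[A.length - 1 + m * (T.length - 1) + j + 1]'hi
            = C[A.length - 1 + j + 1]'(by omega) :=
          getElem_drop_eq hdropSC (j := j + 1) (by omega) (by omega)
        rw [e0, e1]
        exact hC1 (A.length - 1 + j) (by omega)
      · obtain ⟨j, rfl⟩ : ∃ j, i = (A.length - 1) + j := ⟨i - (A.length - 1), by omega⟩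
        have em0 : S[A.length - 1 + j]'(by omega)
            = (witer T x (m + 1))[j]'(by omega) := hmid j (by omega) (by omega)
        have em1 : S[A.length - 1 + j + 1]'hi
            = (witer T x (m + 1))[j + 1]'(by omega) := hmid (j + 1) (by omega) (by omega)
        rw [em0, em1]
        exact hW1 j (by omega)
  · intro i hi
    by_cases h1 : i + 2 < (wcomp A T).length
    · rw [getElem_take_eq htakeF (by omega) (by omega) (by omega),
        getElem_take_eq htakeF (by omega) (by omega) (by omega)]
      exact hC2 i (by omega)
    · by_cases h2 : A.length - 1 + m * (T.length - 1) ≤ i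
      · obtain ⟨j, rfl⟩ : ∃ j, i = (A.length - 1 + m * (T.length - 1)) + j :=
          ⟨i - (A.length - 1 + m * (T.length - 1)), by omega⟩
        have e0 : S[A.length - 1 + m * (T.length - 1) + j]'(by omega)
            = C[A.length - 1 + j]'(by omega) := getElem_drop_eq hdropSC (by omega) (by omega)
        have e1 : S[A.length - 1 + m * (T.length - 1) + j + 2]'hi
            = C[A.length - 1 + j + 2]'(by omega) :=
          getElem_drop_eq hdropSC (j := j + 2) (by omega) (by omega)
        rw [e0, e1]
        exact hC2 (A.length - 1 + j) (by omega)
      · obtain ⟨j, rfl⟩ : ∃ j, i = (A.length - 1) + j := ⟨i - (A.length - 1), by omega⟩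
        have em0 : S[A.length - 1 + j]'(by omega)
            = (witer T x (m + 1))[j]'(by omega) := hmid j (by omega) (by omega)
        have em1 : S[A.length - 1 + j + 2]'hi
            = (witer T x (m + 1))[j + 2]'(by omega) := hmid (j + 2) (by omega) (by omega)
        rw [em0, em1]
        exact hW2 j (by omega)

lemma conj_rtg (hAh : A.head? = some c) (hAl : A.getLast? = some x)
    (hTh : T.head? = some x) (hTl : T.getLast? = some x) (m : ℕ) :
    ReflTransGen RStep (witer (wcomp (wcomp A T) A.reverse) c (m + 1))
      (wcomp (wcomp A (witer T x (m + 1))) A.reverse) := by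
  have hTne : T ≠ [] := by rintro rfl; simp at hTh
  have hAne : A ≠ [] := by rintro rfl; simp at hAh
  set C := wcomp (wcomp A T) A.reverse with hC
  have hFne : wcomp A T ≠ [] := wcomp_ne_nil hAne _
  have hCne : C ≠ [] := wcomp_ne_nil hFne _
  have hFl : (wcomp A T).getLast? = some x := by rw [last?_wcomp hAl hTh]; exact hTl
  have hCh : C.head? = some c := by
    rw [hC, head?_wcomp hFne, head?_wcomp hAne, hAh]
  have hCl : C.getLast? = some c := by
    rw [hC, last?_wcomp hFl (by rw [List.head?_reverse]; exact hAl),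
      List.getLast?_reverse, hAh]
  induction m with
  | zero =>
    have h1 : witer C c 1 = C := by simp [witer, wcomp]
    have h2 : witer T x 1 = T := by simp [witer, wcomp]
    rw [h1, h2]
  | succ m ih =>
    have hwne : witer T x (m + 1) ≠ [] := witer_ne_nil hTne _
    set Z := wcomp (witer T x (m + 1)) A.reverse with hZ
    have hZh : Z.head? = some x := by
      rw [hZ, head?_wcomp hwne, witer_head hTh]
    have step1 : ReflTransGen RStep (witer C c (m + 2))
        (wcomp C (wcomp (wcomp A (witer T x (m + 1))) A.reverse)) := by
      show ReflTransGen RStep (wcomp C (witer C c (m + 1))) _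
      exact rtg_wcomp_left hCl ih (witer_head hCh _)
    have e1 : wcomp C (wcomp (wcomp A (witer T x (m + 1))) A.reverse)
        = wcomp (wcomp A T) (wcomp (wcomp A.reverse A) Z) := by
      rw [hC, hZ, wcomp_assoc (witer_ne_nil hTne _)]
      rw [wcomp_assoc (by simpa using hAne)]
      congr 1
      rw [← wcomp_assoc hAne]
    have hcan : ReflTransGen RStep (wcomp A.reverse A) [x] := by
      have := rtg_cancel (l := A.reverse) (by rw [List.head?_reverse]; exact hAl)
      rwa [List.reverse_reverse] at this
    have step3 : ReflTransGen RStep (wcomp (wcomp A.reverse A) Z) Z := by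
      have h4 := rstep_append_right_rtg Z.tail hcan
      show ReflTransGen RStep ((wcomp A.reverse A) ++ Z.tail) Z
      refine h4.trans ?_
      rw [show ([x] : List V) ++ Z.tail = wcomp [x] Z from rfl, wcomp_single_left hZh]
    have step4 : ReflTransGen RStep (wcomp (wcomp A T) (wcomp (wcomp A.reverse A) Z))
        (wcomp (wcomp A T) Z) := by
      refine rtg_wcomp_left hFl step3 ?_
      rw [head?_wcomp (wcomp_ne_nil (by simpa using hAne) _),
        head?_wcomp (by simpa using hAne), List.head?_reverse]
      exact hAl
    have e5 : wcomp (wcomp A T) Z = wcomp (wcomp A (witer T x (m + 2))) A.reverse :=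
      (S_eq_front hTne (m + 1)).symm
    rw [← e5]
    exact (step1.trans (e1 ▸ step4 : ReflTransGen RStep _ _))

end Conj

/-! ### Loop-freeness of iterates -/

lemma loopfree_of_reduced {l : List V} (h : IsReduced l) : l.Chain' (· ≠ ·) := by
  unfold List.Chain'
  rw [List.isChain_iff_getElem]
  intro i hi
  exact (indices_of_reduced h).1 i (by omega)

lemma reverse_loopfree {l : List V} (h : l.Chain' (· ≠ ·)) : l.reverse.Chain' (· ≠ ·) := by
  unfold List.Chain' at *
  rw [List.isChain_reverse]
  refine h.imp ?_
  intro a b hab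
  exact hab.symm

lemma witer_loopfree {R : List V} {h : V} (hRh : R.head? = some h)
    (hRl : R.getLast? = some h) (hR : R.Chain' (· ≠ ·)) (n : ℕ) :
    (witer R h n).Chain' (· ≠ ·) := by
  have hRne : R ≠ [] := by rintro rfl; simp at hRh
  induction n with
  | zero => simp [witer, List.Chain']
  | succ n ih =>
    exact loopfree_wcomp hR ih (by rw [hRl, witer_head hRh]) (witer_ne_nil hRne n)

/-! ### Facts about `zpowWalk` -/

section Zpow

variable {R : List V} {h : V}

lemma zpow_head (hRh : R.head? = some h) (hRl : R.getLast? = some h) (n : ℤ) :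
    (zpowWalk R h n).head? = some h := by
  unfold zpowWalk
  split
  · exact witer_head hRh _
  · exact witer_head (by rw [List.head?_reverse]; exact hRl) _

lemma zpow_last (hRh : R.head? = some h) (hRl : R.getLast? = some h) (n : ℤ) :
    (zpowWalk R h n).getLast? = some h := by
  unfold zpowWalk
  split
  · exact witer_last hRh hRl _
  · exact witer_last (by rw [List.head?_reverse]; exact hRl)
      (by rw [List.getLast?_reverse]; exact hRh) _

lemma zpow_ne_nil (hRh : R.head? = some h) (n : ℤ) : zpowWalk R h n ≠ [] := by
  have hRne : R ≠ [] := by rintro rfl; simp at hRh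
  unfold zpowWalk
  split
  · exact witer_ne_nil hRne _
  · exact witer_ne_nil (by simpa using hRne) _

lemma zpow_loopfree (hRh : R.head? = some h) (hRl : R.getLast? = some h)
    (hR : R.Chain' (· ≠ ·)) (n : ℤ) : (zpowWalk R h n).Chain' (· ≠ ·) := by
  unfold zpowWalk
  split
  · exact witer_loopfree hRh hRl hR _
  · exact witer_loopfree (by rw [List.head?_reverse]; exact hRl)
      (by rw [List.getLast?_reverse]; exact hRh) (reverse_loopfree hR) _

lemma zpow_even (hRh : R.head? = some h) (hReven : Even (R.length - 1)) (n : ℤ) :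
    Even ((zpowWalk R h n).length - 1) := by
  have hRne : R ≠ [] := by rintro rfl; simp at hRh
  unfold zpowWalk
  split
  · rw [witer_length hRne]
    simpa using hReven.mul_left _
  · rw [witer_length (by simpa using hRne), List.length_reverse]
    simpa using hReven.mul_left _

lemma zpow_sub (hRh : R.head? = some h) (hRl : R.getLast? = some h) {n₁ n₂ : ℤ}
    (hlt : n₁ < n₂) :
    ReflTransGen RStep (wcomp (zpowWalk R h n₂) (zpowWalk R h n₁).reverse)
      (witer R h (n₂ - n₁).toNat) := by
  have hRne : R ≠ [] := by rintro rfl; simp at hRh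
  have hrevh : R.reverse.head? = some h := by rw [List.head?_reverse]; exact hRl
  have hrevl : R.reverse.getLast? = some h := by rw [List.getLast?_reverse]; exact hRh
  rcases le_or_gt 0 n₁ with h1 | h1
  · have h2 : (0 : ℤ) ≤ n₂ := le_trans h1 hlt.le
    rw [zpowWalk, if_pos h2, zpowWalk, if_pos h1, witer_reverse hRh hRl]
    rw [show n₂.toNat = (n₂ - n₁).toNat + n₁.toNat by omega, witer_add hRh,
      wcomp_assoc (witer_ne_nil hRne _)]
    have hc : ReflTransGen RStep
        (wcomp (witer R h n₁.toNat) (witer R.reverse h n₁.toNat)) [h] := by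
      rw [← witer_reverse hRh hRl]
      exact rtg_cancel (witer_head hRh _)
    have hstep := rtg_wcomp_left (witer_last hRh hRl (n₂ - n₁).toNat) hc
      (by rw [head?_wcomp (witer_ne_nil hRne _), witer_head hRh])
    refine hstep.trans ?_
    rw [wcomp_single_right]
  · rcases le_or_gt 0 n₂ with h2 | h2
    · rw [zpowWalk, if_pos h2, zpowWalk, if_neg (by omega), witer_reverse hrevh hrevl,
        List.reverse_reverse,
        show (n₂ - n₁).toNat = n₂.toNat + (-n₁).toNat by omega, witer_add hRh]
    · rw [zpowWalk, if_neg (by omega), zpowWalk, if_neg (by omega),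
        witer_reverse hrevh hrevl, List.reverse_reverse,
        show (-n₁).toNat = (-n₂).toNat + (n₂ - n₁).toNat by omega, witer_add hRh,
        ← wcomp_assoc (witer_ne_nil hRne _)]
      have hc : ReflTransGen RStep
          (wcomp (witer R.reverse h (-n₂).toNat) (witer R h (-n₂).toNat)) [h] := by
        rw [show witer R h (-n₂).toNat = (witer R.reverse h (-n₂).toNat).reverse from by
          rw [witer_reverse hrevh hrevl, List.reverse_reverse]]
        exact rtg_cancel (witer_head hrevh _)
      have hstep := rstep_append_right_rtg (witer R h (n₂ - n₁).toNat).tail hc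
      refine ReflTransGen.trans (show ReflTransGen RStep _ _ from hstep) ?_
      rw [show ([h] : List V) ++ (witer R h (n₂ - n₁).toNat).tail
          = wcomp [h] (witer R h (n₂ - n₁).toNat) from rfl,
        wcomp_single_left (witer_head hRh _)]

end Zpow

/-! ### The key lemma -/

lemma key {X : Type} {H : Dgraph X} {h b : X} {R P : List X}
    (hRh : R.head? = some h) (hRl : R.getLast? = some h)
    (hRred : IsReduced R) (hReven : Even (wlen R))
    (hPh : P.head? = some h) (hPl : P.getLast? = some b)
    (hPred : IsReduced P) (hPeven : Even (wlen P))
    (hnc : ¬ INCompatible H R)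
    {Q₁ Q₂ : List X} {n₁ n₂ : ℤ}
    (hr1 : IsReduced Q₁) (hi1 : INCompatible H Q₁)
    (hp1 : PiEq (wcomp (zpowWalk R h n₁) P) Q₁)
    (hr2 : IsReduced Q₂) (hi2 : INCompatible H Q₂)
    (hp2 : PiEq (wcomp (zpowWalk R h n₂) P) Q₂)
    (hlt : n₁ < n₂) : False := by
  have hRne : R ≠ [] := by rintro rfl; simp at hRh
  have hPne : P ≠ [] := by rintro rfl; simp at hPh
  obtain ⟨er, her⟩ := id hReven
  have her' : R.length - 1 = er + er := her
  obtain ⟨ep, hep⟩ := id hPeven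
  have hep' : P.length - 1 = ep + ep := hep
  have hR3 : 3 ≤ R.length := by
    rcases hL : R.length with _ | _ | _ | k
    · exact absurd (List.length_eq_zero_iff.mp hL) hRne
    · exact absurd (show INCompatible H R from fun i hik => absurd hik (by omega)) hnc
    · omega
    · omega
  -- facts about the two unreduced walks
  have hZh : ∀ n : ℤ, (zpowWalk R h n).head? = some h := zpow_head hRh hRl
  have hZl : ∀ n : ℤ, (zpowWalk R h n).getLast? = some h := zpow_last hRh hRl
  have hZne : ∀ n : ℤ, zpowWalk R h n ≠ [] := zpow_ne_nil hRh
  have hZloop : ∀ n : ℤ, (zpowWalk R h n).Chain' (· ≠ ·) :=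
    zpow_loopfree hRh hRl (loopfree_of_reduced hRred)
  have hZeven : ∀ n : ℤ, Even ((zpowWalk R h n).length - 1) := zpow_even hRh hReven
  have hWh : ∀ n : ℤ, (wcomp (zpowWalk R h n) P).head? = some h := fun n => by
    rw [head?_wcomp (hZne n)]; exact hZh n
  have hWl : ∀ n : ℤ, (wcomp (zpowWalk R h n) P).getLast? = some b := fun n => by
    rw [last?_wcomp (hZl n) hPh]; exact hPl
  have hWloop : ∀ n : ℤ, (wcomp (zpowWalk R h n) P).Chain' (· ≠ ·) := fun n =>
    loopfree_wcomp (hZloop n) (loopfree_of_reduced hPred)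
      (by rw [hZl n, hPh]) hPne
  have hWlen : ∀ n : ℤ, (wcomp (zpowWalk R h n) P).length
      = (zpowWalk R h n).length + P.length - 1 := fun n => length_wcomp _ hPne
  have hWeven : ∀ n : ℤ, Even ((wcomp (zpowWalk R h n) P).length - 1) := fun n => by
    obtain ⟨ez, hez⟩ := hZeven n
    have hz1 : 1 ≤ (zpowWalk R h n).length := List.length_pos_iff.mpr (hZne n)
    have hp1' : 1 ≤ P.length := List.length_pos_iff.mpr hPne
    exact ⟨ez + ep, by rw [hWlen n]; omega⟩
  -- facts about Q₁ and Q₂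
  have hrtg1 : ReflTransGen RStep (wcomp (zpowWalk R h n₁) P) Q₁ :=
    rtg_reduced_of_piEq hp1 hr1
  have hrtg2 : ReflTransGen RStep (wcomp (zpowWalk R h n₂) P) Q₂ :=
    rtg_reduced_of_piEq hp2 hr2
  have hQ1h : Q₁.head? = some h := by rw [← rtg_head hrtg1]; exact hWh n₁
  have hQ1l : Q₁.getLast? = some b := by rw [← rtg_last hrtg1]; exact hWl n₁
  have hQ2h : Q₂.head? = some h := by rw [← rtg_head hrtg2]; exact hWh n₂
  have hQ2l : Q₂.getLast? = some b := by rw [← rtg_last hrtg2]; exact hWl n₂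
  have hQ1ne : Q₁ ≠ [] := by rintro rfl; simp at hQ1h
  have hQ2ne : Q₂ ≠ [] := by rintro rfl; simp at hQ2h
  obtain ⟨hQ1loop, hQ1par⟩ := rtg_loopfree (hWloop n₁) hrtg1
  obtain ⟨hQ2loop, hQ2par⟩ := rtg_loopfree (hWloop n₂) hrtg2
  have hQ1even : Even (Q₁.length - 1) := by
    obtain ⟨e, he⟩ := hWeven n₁
    have h1 : 1 ≤ Q₁.length := List.length_pos_iff.mpr hQ1ne
    have h2 : 1 ≤ (wcomp (zpowWalk R h n₁) P).length :=
      List.length_pos_iff.mpr (wcomp_ne_nil (hZne n₁) _)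
    exact ⟨(Q₁.length - 1) / 2, by omega⟩
  have hQ2even : Even (Q₂.length - 1) := by
    obtain ⟨e, he⟩ := hWeven n₂
    have h1 : 1 ≤ Q₂.length := List.length_pos_iff.mpr hQ2ne
    have h2 : 1 ≤ (wcomp (zpowWalk R h n₂) P).length :=
      List.length_pos_iff.mpr (wcomp_ne_nil (hZne n₂) _)
    exact ⟨(Q₂.length - 1) / 2, by omega⟩
  -- the closed walk W₀ = Q₂ ⬝ Q₁⁻¹
  have hW0in : INCompatible H (wcomp Q₂ Q₁.reverse) :=
    incomp_wcomp hi2 (incomp_reverse hQ1even hi1)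
      (by rw [hQ2l, List.head?_reverse, hQ1l]) hQ2ne (by simpa using hQ1ne) hQ2even
  have hW0loop : (wcomp Q₂ Q₁.reverse).Chain' (· ≠ ·) :=
    loopfree_wcomp hQ2loop (reverse_loopfree hQ1loop)
      (by rw [hQ2l, List.head?_reverse, hQ1l]) (by simpa using hQ1ne)
  -- PiEq W₀ (witer R h m)
  have hm1 : 1 ≤ (n₂ - n₁).toNat := by omega
  have step7a : PiEq (wcomp Q₂ Q₁.reverse) (wcomp Q₂ (wcomp (zpowWalk R h n₁) P).reverse) :=
    piEq_wcomp_left hQ2l (piEq_reverse (EqvGen.symm _ _ hp1))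
      (by rw [List.head?_reverse, hQ1l])
  have step7c : PiEq (wcomp Q₂ (wcomp (zpowWalk R h n₁) P).reverse)
      (wcomp (wcomp (zpowWalk R h n₂) P) (wcomp (zpowWalk R h n₁) P).reverse) :=
    piEq_append_right _ (EqvGen.symm _ _ hp2)
  have step7d : wcomp (wcomp (zpowWalk R h n₂) P) (wcomp (zpowWalk R h n₁) P).reverse
      = wcomp (zpowWalk R h n₂) (wcomp P (wcomp P.reverse (zpowWalk R h n₁).reverse)) := by
    rw [show (wcomp (zpowWalk R h n₁) P).reverse
        = wcomp P.reverse (zpowWalk R h n₁).reverse from reverse_wcomp (hZl n₁) hPh]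
    rw [wcomp_assoc hPne]
  have step7e : ReflTransGen RStep
      (wcomp P (wcomp P.reverse (zpowWalk R h n₁).reverse)) (zpowWalk R h n₁).reverse := by
    rw [← wcomp_assoc (show P.reverse ≠ [] by simpa using hPne)]
    have h1 := rstep_append_right_rtg ((zpowWalk R h n₁).reverse.tail) (rtg_cancel hPh)
    refine ReflTransGen.trans (show ReflTransGen RStep _ _ from h1) ?_
    rw [show ([h] : List X) ++ (zpowWalk R h n₁).reverse.tail
        = wcomp [h] (zpowWalk R h n₁).reverse from rfl,
      wcomp_single_left (by rw [List.head?_reverse]; exact hZl n₁)]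
  have step7f : ReflTransGen RStep
      (wcomp (zpowWalk R h n₂) (wcomp P (wcomp P.reverse (zpowWalk R h n₁).reverse)))
      (wcomp (zpowWalk R h n₂) (zpowWalk R h n₁).reverse) :=
    rtg_wcomp_left (hZl n₂) step7e (by rw [head?_wcomp hPne]; exact hPh)
  have step7g := zpow_sub hRh hRl hlt
  have hW0pi : PiEq (wcomp Q₂ Q₁.reverse) (witer R h (n₂ - n₁).toNat) := by
    refine EqvGen.trans _ _ _ (EqvGen.trans _ _ _ step7a step7c) ?_
    rw [step7d]
    exact EqvGen.trans _ _ _ (rtg_piEq step7f) (rtg_piEq step7g)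
  -- decomposition of R
  obtain ⟨A, T, x, hReq, hAh, hAl, hTh, hTl, hTred, hT3, hcycT, hRlen⟩ :=
    cyc_decomp R.length R h rfl hRh hRl hRred hR3
  have hTne : T ≠ [] := by rintro rfl; simp at hTh
  have hAne : A ≠ [] := by rintro rfl; simp at hAh
  have hA1 : 1 ≤ A.length := List.length_pos_iff.mpr hAne
  obtain ⟨m', hm'⟩ : ∃ m', (n₂ - n₁).toNat = m' + 1 := ⟨(n₂ - n₁).toNat - 1, by omega⟩
  have hq : (m' + 1) * (T.length - 1) = m' * (T.length - 1) + (T.length - 1) := by ring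
  have hCred : IsReduced (wcomp (wcomp A T) A.reverse) := hReq ▸ hRred
  have hSred : IsReduced (wcomp (wcomp A (witer T x (m' + 1))) A.reverse) :=
    conj_reduced hAh hAl hTh hTl hT3 hcycT hTred hCred m'
  have hrtgS : ReflTransGen RStep (witer R h (m' + 1))
      (wcomp (wcomp A (witer T x (m' + 1))) A.reverse) := by
    have := conj_rtg hAh hAl hTh hTl m'
    rwa [← hReq] at this
  have hpiS : PiEq (wcomp Q₂ Q₁.reverse) (wcomp (wcomp A (witer T x (m' + 1))) A.reverse) := by
    rw [hm'] at hW0pi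
    exact EqvGen.trans _ _ _ hW0pi (rtg_piEq hrtgS)
  have hSin : INCompatible H (wcomp (wcomp A (witer T x (m' + 1))) A.reverse) :=
    rtg_incomp hW0loop hW0in (rtg_reduced_of_piEq hpiS hSred)
  -- transfer the pattern back to R
  have hFl : (wcomp A T).getLast? = some x := by rw [last?_wcomp hAl hTh]; exact hTl
  have hFlen : (wcomp A T).length = A.length + T.length - 1 := length_wcomp _ hTne
  have hF1 : 1 ≤ (wcomp A T).length := List.length_pos_iff.mpr (wcomp_ne_nil hAne _)
  have hteven : Even (T.length - 1) := ⟨(T.length - 1) / 2, by omega⟩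
  have hmsh : Even (m' * (T.length - 1)) := hteven.mul_left m'
  have htk : R.take ((wcomp A T).length - 1 + 1)
      = (wcomp (wcomp A (witer T x (m' + 1))) A.reverse).take ((wcomp A T).length - 1 + 1) := by
    rw [show (wcomp A T).length - 1 + 1 = (wcomp A T).length by omega]
    rw [S_eq_front hTne m', take_wcomp]
    conv_lhs => rw [hReq]
    rw [take_wcomp]
  have hdropR : R.drop ((wcomp A T).length - 1) = A.reverse := by
    conv_lhs => rw [hReq]
    exact drop_wcomp hFl (by rw [List.head?_reverse]; exact hAl)
  have hdropS : (wcomp (wcomp A (witer T x (m' + 1))) A.reverse).drop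
      ((wcomp A T).length - 1 + m' * (T.length - 1)) = A.reverse := by
    rw [show (wcomp A T).length - 1 + m' * (T.length - 1)
        = (wcomp A (witer T x (m' + 1))).length - 1 from by
      rw [length_wcomp _ (witer_ne_nil hTne _), witer_length hTne]; omega]
    exact drop_wcomp
      (by rw [last?_wcomp hAl (witer_head hTh _)]; exact witer_last hTh hTl _)
      (by rw [List.head?_reverse]; exact hAl)
  have hlenRS : R.length + m' * (T.length - 1)
      = (wcomp (wcomp A (witer T x (m' + 1))) A.reverse).length := by
    rw [length_wcomp _ (by simpa using hAne), length_wcomp _ (witer_ne_nil hTne _),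
      witer_length hTne, List.length_reverse]
    omega
  exact hnc (incomp_transfer hSin ((wcomp A T).length - 1) (m' * (T.length - 1)) hmsh
    htk (hdropR.trans hdropS.symm) hlenRS)

/-! ### The master lemma -/

lemma master {X : Type} {H : Dgraph X} {h b : X} {R P : List X}
    (hRh : R.head? = some h) (hRl : R.getLast? = some h)
    (hRred : IsReduced R) (hReven : Even (wlen R))
    (hPh : P.head? = some h) (hPl : P.getLast? = some b)
    (hPred : IsReduced P) (hPeven : Even (wlen P))
    (hnc : ¬ INCompatible H R) :
    Set.Subsingleton {Q : List X | IsReduced Q ∧ INCompatible H Q ∧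
      ∃ n : ℤ, PiEq (wcomp (zpowWalk R h n) P) Q} := by
  intro Q₁ hQ₁ Q₂ hQ₂
  obtain ⟨hr1, hi1, n₁, hp1⟩ := hQ₁
  obtain ⟨hr2, hi2, n₂, hp2⟩ := hQ₂
  rcases lt_trichotomy n₁ n₂ with hlt | heq | hlt
  · exact (key hRh hRl hRred hReven hPh hPl hPred hPeven hnc
      hr1 hi1 hp1 hr2 hi2 hp2 hlt).elim
  · subst heq
    exact piEq_unique (EqvGen.trans _ _ _ (EqvGen.symm _ _ hp1) hp2) hr1 hr2
  · exact (key hRh hRl hRred hReven hPh hPl hPred hPeven hnc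
      hr2 hi2 hp2 hr1 hi1 hp1 hlt).elim

/-- The opposite digraph. -/
def opD {X : Type} (H : Dgraph X) : Dgraph X := ⟨fun u v => H.Adj v u⟩

end HRecolAux
/-- If a closed reduced even walk `R` based at `h` does not satisfy the
IN-zigzag pattern, then at most one of the reduced walks `RⁿP`, `n ∈ ℤ`,
satisfies the IN-zigzag pattern; analogously for the OUT-zigzag pattern. -/
theorem statement11 {X : Type} (H : Dgraph X) (h : X) (b : X)
    (R P : List X)
    (hR : IsWalk H h h R) (hRred : IsReduced R) (hReven : Even (wlen R))
    (hP : IsWalk H h b P) (hPred : IsReduced P) (hPeven : Even (wlen P)) :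
    (¬ INCompatible H R →
      Set.Subsingleton {Q : List X | IsReduced Q ∧ INCompatible H Q ∧
        ∃ n : ℤ, PiEq (wcomp (zpowWalk R h n) P) Q}) ∧
    (¬ OUTCompatible H R →
      Set.Subsingleton {Q : List X | IsReduced Q ∧ OUTCompatible H Q ∧
        ∃ n : ℤ, PiEq (wcomp (zpowWalk R h n) P) Q}) := by
  obtain ⟨hRne, hRh, hRl, -⟩ := hR
  obtain ⟨hPne, hPh, hPl, -⟩ := hP
  constructor
  · intro hnc
    exact HRecolAux.master hRh hRl hRred hReven hPh hPl hPred hPeven hnc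
  · intro hnc
    have hnc' : ¬ INCompatible (HRecolAux.opD H) R := hnc
    have hres := HRecolAux.master (H := HRecolAux.opD H)
      hRh hRl hRred hReven hPh hPl hPred hPeven hnc'
    exact hres
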